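/- arXiv:2105.08869 — 4 statements merged into one kernel-verified Lean document; each statement's English description precedes it below -/
import Mathlib

section
/- Let A = {1,…,m} with m ≥ 2, let μ_i ∈ (0,1] and θ_i > 0 for each i ∈ A, and let F : (0,∞) → (0,∞) be an increasing function with ∑_{n=1}^∞ 1/F(n) < ∞. For each arm i, let {r_i(n)}_{n≥0} be independent exponential random variables (independent across both i and n) with E[r_i(n)] = 1/(μ_i F(n + θ_i)). Then, almost surely: the totals R_i := ∑_{n=0}^∞ r_i(n) are all finite and pairwise distinct, so there is a unique arm a = argmin_{i∈A} R_i; and for every b ≠ a, the set {n ∈ ℕ : ∑_{k=0}^n r_b(k) < R_a} is finite. In particular the 'attraction time' N := max_{b≠a} ∑_{k=0}^{K_b} r_b(k), where K_b is the largest n with ∑_{k=0}^n r_b(k) < R_a, is almost surely finite, and after time N only arm a generates rewards in the embedded process (monopoly). -/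
open MeasureTheory ProbabilityTheory

/-- `X` is exponentially distributed with rate `l` under `P`. -/
def IsExponentialRV {Ω : Type*} [MeasurableSpace Ω] (P : Measure Ω) (X : Ω → ℝ) (l : ℝ) : Prop :=
  Measure.map X P = expMeasure l

open Real Set Filter Topology

lemma expMeasure_eq_withDensity (l : ℝ) :
    expMeasure l = volume.withDensity (exponentialPDF l) := rfl

lemma expMeasure_Iio_zero (l : ℝ) : expMeasure l (Set.Iio 0) = 0 := by
  rw [expMeasure_eq_withDensity, withDensity_apply _ measurableSet_Iio,
    setLIntegral_congr_fun measurableSet_Iio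
      (fun x (hx : x < 0) => exponentialPDF_of_neg hx)]
  simp

lemma expMeasure_singleton (l x : ℝ) : expMeasure l {x} = 0 := by
  rw [expMeasure_eq_withDensity]
  exact withDensity_absolutelyContinuous _ _ (measure_singleton x)

lemma expMeasure_ae_nonneg (l : ℝ) : ∀ᵐ x ∂expMeasure l, 0 ≤ x := by
  rw [ae_iff]
  refine measure_mono_null (fun x hx => ?_) (expMeasure_Iio_zero l)
  simpa using not_le.mp hx

lemma expMeasure_Iic {l : ℝ} (hl : 0 < l) {t : ℝ} (ht : 0 ≤ t) :
    expMeasure l (Set.Iic t) = ENNReal.ofReal (1 - rexp (-(l * t))) := by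
  rw [expMeasure_eq_withDensity, withDensity_apply _ measurableSet_Iic,
    lintegral_exponentialPDF_eq_antiDeriv hl t, if_pos ht]

lemma expMeasure_Ioi {l : ℝ} (hl : 0 < l) {t : ℝ} (ht : 0 ≤ t) :
    expMeasure l (Set.Ioi t) = ENNReal.ofReal (rexp (-(l * t))) := by
  haveI := isProbabilityMeasure_expMeasure hl
  have he1 : rexp (-(l * t)) ≤ 1 := by
    rw [exp_le_one_iff]
    nlinarith
  rw [← Set.compl_Iic, measure_compl measurableSet_Iic (measure_ne_top _ _), measure_univ,
    expMeasure_Iic hl ht, ← ENNReal.ofReal_one,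
    ← ENNReal.ofReal_sub _ (by linarith)]
  norm_num

lemma lintegral_id_expMeasure {l : ℝ} (hl : 0 < l) :
    ∫⁻ x, ENNReal.ofReal x ∂expMeasure l = ENNReal.ofReal (1 / l) := by
  haveI := isProbabilityMeasure_expMeasure hl
  rw [lintegral_eq_lintegral_meas_lt _ (expMeasure_ae_nonneg l) measurable_id.aemeasurable]
  have hcong : ∀ t ∈ Set.Ioi (0:ℝ),
      expMeasure l {a : ℝ | t < a} = ENNReal.ofReal (rexp (-(l * t))) := by
    intro t ht
    exact expMeasure_Ioi hl (le_of_lt ht)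
  rw [setLIntegral_congr_fun measurableSet_Ioi hcong]
  have hint : IntegrableOn (fun t : ℝ => rexp (-(l * t))) (Set.Ioi 0) := by
    simpa [neg_mul] using exp_neg_integrableOn_Ioi 0 hl
  rw [← ofReal_integral_eq_lintegral_ofReal hint
    (ae_of_all _ fun t => (exp_pos _).le)]
  congr 1
  have := integral_comp_mul_left_Ioi (fun x => rexp (-x)) 0 hl
  simp only [mul_zero, integral_exp_neg_Ioi_zero, smul_eq_mul, mul_one] at this
  rw [this, one_div]

lemma lintegral_ofReal_of_exponential {Ω : Type*} [MeasurableSpace Ω] {P : Measure Ω}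
    {X : Ω → ℝ} (hX : Measurable X) {l : ℝ} (hl : 0 < l)
    (h : Measure.map X P = expMeasure l) :
    ∫⁻ ω, ENNReal.ofReal (X ω) ∂P = ENNReal.ofReal (1 / l) := by
  rw [← lintegral_id_expMeasure hl, ← h,
    lintegral_map ENNReal.measurable_ofReal hX]

lemma measure_eq_fun_zero {Ω : Type*} [MeasurableSpace Ω] {P : Measure Ω}
    [IsProbabilityMeasure P] {X Z : Ω → ℝ} (hX : Measurable X) (hZ : Measurable Z)
    (hind : IndepFun X Z P) (hatom : ∀ x : ℝ, P.map X {x} = 0) :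
    P {ω | X ω = Z ω} = 0 := by
  have h := (indepFun_iff_map_prod_eq_prod_map_map hZ.aemeasurable hX.aemeasurable).1 hind.symm
  have hs : MeasurableSet {p : ℝ × ℝ | p.1 = p.2} :=
    measurableSet_eq_fun measurable_fst measurable_snd
  have hset : {ω | X ω = Z ω} = (fun ω => (Z ω, X ω)) ⁻¹' {p : ℝ × ℝ | p.1 = p.2} := by
    ext ω; simp [eq_comm]
  rw [hset, ← Measure.map_apply (hZ.prodMk hX) hs, h, Measure.prod_apply hs]
  have hz : ∀ z : ℝ, (P.map X) (Prod.mk z ⁻¹' {p : ℝ × ℝ | p.1 = p.2}) = 0 := by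
    intro z
    convert hatom z using 2
    ext x; simp [eq_comm]
  simp only [hz, lintegral_zero]

/-- **Monopoly via exponential embedding.** With arms `i ∈ Fin m` (`m ≥ 2`),
Bernoulli means `μ i ∈ (0,1]`, biases `θ i > 0`, and an increasing feedback function
`F : (0,∞) → (0,∞)` with `∑ 1/F(n) < ∞`, let `r i n` be independent exponential random
variables with mean `1/(μ i * F (n + θ i))`.  Then almost surely: every total
`R i = ∑' n, r i n` is finite, the totals are pairwise distinct (so there is a unique
arm `a` minimizing `R`), and for every `b ≠ a` the set of `n` with
`∑_{k=0}^n r b k < R a` is finite, i.e. after a finite attraction time only arm `a`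
generates rewards (monopoly). -/
theorem monopoly_of_exponential_embedding {Ω : Type*} [MeasurableSpace Ω] (P : Measure Ω)
    [IsProbabilityMeasure P] (m : ℕ) (hm : 2 ≤ m)
    (μ : Fin m → ℝ) (hμ : ∀ i, μ i ∈ Set.Ioc (0 : ℝ) 1)
    (θ : Fin m → ℝ) (hθ : ∀ i, 0 < θ i)
    (F : ℝ → ℝ) (hFpos : ∀ x > (0 : ℝ), 0 < F x)
    (hFmono : StrictMonoOn F (Set.Ioi (0 : ℝ)))
    (hFsum : Summable fun n : ℕ => 1 / F (n + 1))
    (r : Fin m → ℕ → Ω → ℝ)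
    (hmeas : ∀ i n, Measurable (r i n))
    (hindep : iIndepFun
      (fun p : Fin m × ℕ => r p.1 p.2) P)
    (hexp : ∀ i n, IsExponentialRV P (r i n) (μ i * F (n + θ i))) :
    ∀ᵐ ω ∂P,
      (∀ i, Summable fun n => r i n ω) ∧
      (∀ i j, i ≠ j → (∑' n, r i n ω) ≠ ∑' n, r j n ω) ∧
      ∃ a : Fin m, (∀ b, b ≠ a → (∑' n, r a n ω) < ∑' n, r b n ω) ∧
        ∀ b, b ≠ a →
          {n : ℕ | (∑ k ∈ Finset.range (n + 1), r b k ω) < ∑' n', r a n' ω}.Finite := by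
  have hl : ∀ i (n : ℕ), 0 < μ i * F (n + θ i) := by
    intro i n
    exact mul_pos (hμ i).1 (hFpos _ (add_pos_of_nonneg_of_pos (Nat.cast_nonneg n) (hθ i)))
  have hmap : ∀ i (n : ℕ), Measure.map (r i n) P = expMeasure (μ i * F (n + θ i)) :=
    fun i n => hexp i n
  -- a.s. nonnegativity
  have hnn : ∀ᵐ ω ∂P, ∀ i (n : ℕ), 0 ≤ r i n ω := by
    rw [ae_all_iff]
    intro i
    rw [ae_all_iff]
    intro n
    rw [ae_iff]
    have : {ω | ¬ 0 ≤ r i n ω} = r i n ⁻¹' Set.Iio 0 := by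
      ext ω; simp [not_le]
    rw [this, ← Measure.map_apply (hmeas i n) measurableSet_Iio, hmap i n,
      expMeasure_Iio_zero]
  -- summability of expectations
  have hsumE : ∀ i, Summable fun n : ℕ => 1 / (μ i * F (n + θ i)) := by
    intro i
    have h1 : Summable fun n : ℕ => 1 / F ((n : ℝ) + 1 + θ i) := by
      refine Summable.of_nonneg_of_le (fun n => le_of_lt (one_div_pos.mpr (hFpos _ (by have := hθ i; have h0 : (0:ℝ) ≤ (n:ℝ) := Nat.cast_nonneg n; linarith)))) (fun n => ?_) hFsum
      have hx : (0:ℝ) < (n : ℝ) + 1 := by positivity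
      have hlt : F ((n : ℝ) + 1) < F ((n : ℝ) + 1 + θ i) :=
        hFmono hx (by simp only [Set.mem_Ioi]; linarith [hθ i]) (by linarith [hθ i])
      exact one_div_le_one_div_of_le (hFpos _ hx) hlt.le
    have h2 : Summable fun n : ℕ => 1 / F ((n : ℝ) + θ i) := by
      rw [← summable_nat_add_iff 1]
      refine h1.congr fun n => ?_
      push_cast
      ring_nf
    have h3 : (fun n : ℕ => 1 / (μ i * F ((n : ℝ) + θ i)))
        = fun n : ℕ => (1 / μ i) * (1 / F ((n : ℝ) + θ i)) := by
      funext n; rw [one_div_mul_eq_div, div_div]; ring_nf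
    rw [h3]
    exact h2.mul_left _
  -- a.s. finiteness of ENNReal sums
  have hfin : ∀ᵐ ω ∂P, ∀ i, (∑' n, ENNReal.ofReal (r i n ω)) ≠ ⊤ := by
    rw [ae_all_iff]
    intro i
    have hint : ∫⁻ ω, ∑' n, ENNReal.ofReal (r i n ω) ∂P ≠ ⊤ := by
      rw [lintegral_tsum fun n => ((hmeas i n).ennreal_ofReal).aemeasurable]
      have heach : ∀ n : ℕ, ∫⁻ ω, ENNReal.ofReal (r i n ω) ∂P
          = ENNReal.ofReal (1 / (μ i * F (n + θ i))) := fun n =>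
        lintegral_ofReal_of_exponential (hmeas i n) (hl i n) (hmap i n)
      simp_rw [heach]
      rw [← ENNReal.ofReal_tsum_of_nonneg (fun n => le_of_lt (one_div_pos.mpr (hl i n))) (hsumE i)]
      exact ENNReal.ofReal_ne_top
    have := ae_lt_top (Measurable.ennreal_tsum fun n => (hmeas i n).ennreal_ofReal) hint
    filter_upwards [this] with ω hω using hω.ne
  -- distinctness null events
  set Z : Fin m → Fin m → Ω → ℝ := fun i j ω =>
    (∑' n, ENNReal.ofReal (r j n ω)).toReal - (∑' n, ENNReal.ofReal (r i (n + 1) ω)).toReal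
    with hZdef
  have hZnull : ∀ i j, i ≠ j → P {ω | r i 0 ω = Z i j ω} = 0 := by
    intro i j hij
    set mS : Fin m × ℕ → MeasurableSpace Ω :=
      fun p => MeasurableSpace.comap (r p.1 p.2) inferInstance with hmS
    have hle : ∀ p, mS p ≤ ‹MeasurableSpace Ω› := fun p => (hmeas p.1 p.2).comap_le
    have hii : iIndep mS P := hindep
    have hInd := indep_iSup_of_disjoint hle hii
      (S := {((i, 0) : Fin m × ℕ)}) (T := {((i, 0) : Fin m × ℕ)}ᶜ) disjoint_compl_right
    have hmemT : ∀ p : Fin m × ℕ, p ≠ (i, 0) →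
        Measurable[⨆ p ∈ ({((i, 0) : Fin m × ℕ)}ᶜ : Set (Fin m × ℕ)), mS p] (r p.1 p.2) := by
      intro p hp
      exact Measurable.of_comap_le (le_biSup mS hp)
    have hZmeas : Measurable[⨆ p ∈ ({((i, 0) : Fin m × ℕ)}ᶜ : Set (Fin m × ℕ)), mS p] (Z i j) := by
      apply Measurable.sub
      · apply Measurable.ennreal_toReal
        apply Measurable.ennreal_tsum
        intro n
        exact (hmemT (j, n) (by simp [Prod.ext_iff, Ne.symm hij])).ennreal_ofReal
      · apply Measurable.ennreal_toReal
        apply Measurable.ennreal_tsum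
        intro n
        exact (hmemT (i, n + 1) (by simp [Prod.ext_iff])).ennreal_ofReal
    have hXZ : IndepFun (r i 0) (Z i j) P := by
      rw [indepFun_iff_measure_inter_preimage_eq_mul]
      intro s t hs ht
      refine (Indep_iff _ _ _).1 hInd _ _ ?_ ?_
      · exact le_biSup mS (Set.mem_singleton _) _ ⟨s, hs, rfl⟩
      · exact hZmeas ht
    have hZtop : Measurable (Z i j) :=
      Measurable.mono hZmeas (iSup₂_le fun p _ => hle p) le_rfl
    refine measure_eq_fun_zero (hmeas i 0) hZtop hXZ fun x => ?_
    rw [hmap i 0, expMeasure_singleton]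
  have hdist : ∀ᵐ ω ∂P, ∀ i j, i ≠ j → r i 0 ω ≠ Z i j ω := by
    rw [ae_all_iff]
    intro i
    rw [ae_all_iff]
    intro j
    rcases eq_or_ne i j with h | h
    · simp [h]
    · have hset : {a : Ω | ¬(i ≠ j → r i 0 a ≠ Z i j a)} = {ω | r i 0 ω = Z i j ω} := by
        ext ω; simp [h]
      rw [ae_iff, hset]
      exact hZnull i j h
  -- combine
  filter_upwards [hnn, hfin, hdist] with ω h1 h2 h3
  have hsum : ∀ i, Summable fun n => r i n ω := by
    intro i
    have := ENNReal.summable_toReal (h2 i)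
    refine this.congr fun n => ?_
    exact ENNReal.toReal_ofReal (h1 i n)
  have htsum_eq : ∀ i, (∑' n, ENNReal.ofReal (r i n ω)).toReal = ∑' n, r i n ω := by
    intro i
    rw [← ENNReal.ofReal_tsum_of_nonneg (h1 i) (hsum i),
      ENNReal.toReal_ofReal (tsum_nonneg (h1 i))]
  have hdistinct : ∀ i j, i ≠ j → (∑' n, r i n ω) ≠ ∑' n, r j n ω := by
    intro i j hij heq
    apply h3 i j hij
    have hshift : Summable fun n => r i (n + 1) ω := (summable_nat_add_iff 1).2 (hsum i)
    have htail : (∑' n, ENNReal.ofReal (r i (n + 1) ω)).toReal = ∑' n, r i (n + 1) ω := by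
      rw [← ENNReal.ofReal_tsum_of_nonneg (fun n => h1 i (n + 1)) hshift,
        ENNReal.toReal_ofReal (tsum_nonneg fun n => h1 i (n + 1))]
    have hsplit := (hsum i).tsum_eq_zero_add
    simp only [hZdef, htsum_eq j, htail]
    rw [← heq, hsplit]
    ring
  refine ⟨hsum, hdistinct, ?_⟩
  obtain ⟨a, -, ha⟩ := Finset.exists_min_image Finset.univ (fun i => ∑' n, r i n ω)
    ⟨⟨0, by omega⟩, Finset.mem_univ _⟩
  have hstrict : ∀ b, b ≠ a → (∑' n, r a n ω) < ∑' n, r b n ω := fun b hb =>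
    lt_of_le_of_ne (ha b (Finset.mem_univ _)) (hdistinct a b (Ne.symm hb))
  refine ⟨a, hstrict, fun b hb => ?_⟩
  have htend : Tendsto (fun n => ∑ k ∈ Finset.range (n + 1), r b k ω) atTop
      (𝓝 (∑' n, r b n ω)) :=
    ((hsum b).hasSum.tendsto_sum_nat).comp (tendsto_add_atTop_nat 1)
  have hev : ∀ᶠ n in atTop, (∑' n', r a n' ω) < ∑ k ∈ Finset.range (n + 1), r b k ω :=
    htend.eventually_const_lt (hstrict b hb)
  rw [← Nat.cofinite_eq_atTop] at hev
  have hfin' : {n : ℕ | ¬ (∑' n', r a n' ω) < ∑ k ∈ Finset.range (n + 1), r b k ω}.Finite :=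
    Filter.eventually_cofinite.mp hev
  exact hfin'.subset fun n hn => not_lt.mpr (le_of_lt hn)
end

section
/- Let (r_j)_{j≥n} be independent exponential random variables where r_j has rate h(j) > 0 (so E[r_j] = 1/h(j)), with ∑_{j≥n} 1/h(j) < ∞, and set R = ∑_{j≥n} r_j and Z = ∑_{j≥n} 1/h(j)². Then for every s with 0 ≤ s ≤ h(j)/2 for all j ≥ n, both E[exp(s(R − E[R]))] ≤ exp(2s²Z) and E[exp(−s(R − E[R]))] ≤ exp(2s²Z). -/
open MeasureTheory ProbabilityTheory Real Set Filter
open scoped ENNReal NNReal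

lemma lint_exp_expMeasure {l a : ℝ} (hl : 0 < l) (ha : a < l) :
    ∫⁻ x, ENNReal.ofReal (Real.exp (a * x)) ∂(expMeasure l) = ENNReal.ofReal (l / (l - a)) := by
  have hmeas : Measurable (exponentialPDF l) :=
    (measurable_exponentialPDFReal l).ennreal_ofReal
  rw [show expMeasure l = (volume : Measure ℝ).withDensity (exponentialPDF l) from rfl,
    lintegral_withDensity_eq_lintegral_mul _ hmeas (by fun_prop)]
  have heq : (fun x => (exponentialPDF l * fun x => ENNReal.ofReal (Real.exp (a * x))) x)
      = Set.indicator (Set.Ici (0:ℝ))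
        (fun x => ENNReal.ofReal (l * Real.exp (-((l - a) * x)))) := by
    funext x
    simp only [Pi.mul_apply, exponentialPDF_eq]
    by_cases hx : 0 ≤ x
    · rw [if_pos hx, Set.indicator_of_mem (Set.mem_Ici.2 hx),
        ← ENNReal.ofReal_mul (by positivity)]
      congr 1
      rw [mul_assoc, ← Real.exp_add]
      congr 1
      ring
    · rw [if_neg hx, Set.indicator_of_notMem (by simpa using hx)]
      simp
  rw [heq, lintegral_indicator measurableSet_Ici _,
    ← setLIntegral_congr (Ioi_ae_eq_Ici (a := (0:ℝ)))]
  have hla : 0 < l - a := by linarith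
  have hint : IntegrableOn (fun x => l * Real.exp (-((l - a) * x))) (Set.Ioi 0) := by
    have base : IntegrableOn (fun x => l * Real.exp (-(l - a) * x)) (Set.Ioi 0) :=
      (exp_neg_integrableOn_Ioi 0 hla).const_mul l
    exact base.congr_fun (fun x _ => by simp only [neg_mul]) measurableSet_Ioi
  rw [← ofReal_integral_eq_lintegral_ofReal hint (ae_of_all _ fun x => by positivity)]
  congr 1
  rw [integral_const_mul]
  have h2 := integral_comp_mul_left_Ioi (fun y => Real.exp (-y)) 0 hla
  simp only [mul_zero] at h2
  rw [h2, integral_exp_neg_Ioi, smul_eq_mul, neg_zero, Real.exp_zero]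
  field_simp

lemma lint_id_expMeasure {l : ℝ} (hl : 0 < l) :
    ∫⁻ x, ENNReal.ofReal x ∂(expMeasure l) = ENNReal.ofReal (1 / l) := by
  have hmeas : Measurable (exponentialPDF l) :=
    (measurable_exponentialPDFReal l).ennreal_ofReal
  rw [show expMeasure l = (volume : Measure ℝ).withDensity (exponentialPDF l) from rfl,
    lintegral_withDensity_eq_lintegral_mul _ hmeas (by fun_prop)]
  have heq : (fun x => (exponentialPDF l * fun x => ENNReal.ofReal x) x)
      = Set.indicator (Set.Ici (0:ℝ))
        (fun x => ENNReal.ofReal (Real.exp (-(l * x)) * (l * x))) := by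
    funext x
    simp only [Pi.mul_apply, exponentialPDF_eq]
    by_cases hx : 0 ≤ x
    · rw [if_pos hx, Set.indicator_of_mem (Set.mem_Ici.2 hx),
        ← ENNReal.ofReal_mul (by positivity)]
      congr 1
      ring
    · rw [if_neg hx, Set.indicator_of_notMem (by simpa using hx)]
      simp
  rw [heq, lintegral_indicator measurableSet_Ici _,
    ← setLIntegral_congr (Ioi_ae_eq_Ici (a := (0:ℝ)))]
  have hG : IntegrableOn (fun x => Real.exp (-x) * x) (Set.Ioi (0:ℝ)) := by
    have := Real.GammaIntegral_convergent (by norm_num : (0:ℝ) < 2)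
    refine this.congr_fun (fun x hx => ?_) measurableSet_Ioi
    rw [show (2:ℝ) - 1 = 1 by norm_num]; simp only [Real.rpow_one]
  have hint : IntegrableOn (fun x => Real.exp (-(l * x)) * (l * x)) (Set.Ioi 0) := by
    have h2 := integral_comp_mul_left_Ioi (fun y => Real.exp (-y) * y) 0 hl
    -- integrability via iff lemma
    have := (integrableOn_Ioi_comp_mul_left_iff (fun y => Real.exp (-y) * y) 0 hl).2
    simp only [mul_zero] at this
    exact this hG
  rw [← ofReal_integral_eq_lintegral_ofReal hint
    ((ae_restrict_iff' measurableSet_Ioi).2 (ae_of_all _ fun x hx => by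
      have hx' : (0:ℝ) < x := hx
      positivity))]
  congr 1
  have h2 := integral_comp_mul_left_Ioi (fun y => Real.exp (-y) * y) 0 hl
  simp only [mul_zero] at h2
  have hGamma : ∫ x in Ioi (0:ℝ), Real.exp (-x) * x = 1 := by
    have h3 := (Real.Gamma_eq_integral (by norm_num : (0:ℝ) < 2)).symm
    rw [show ((2:ℝ)-1) = 1 by norm_num] at h3
    simp only [Real.rpow_one] at h3
    have h4 : Real.Gamma 2 = 1 := by
      simpa using Real.Gamma_nat_eq_factorial 1
    rw [h3, h4]
  rw [h2, hGamma, smul_eq_mul, mul_one, one_div]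

lemma rate_ratio_le_exp {l a : ℝ} (hl : 0 < l) (ha2 : a ≤ l / 2) :
    l / (l - a) ≤ Real.exp (a * (1/l) + 2 * a ^ 2 * (1/l) ^ 2) := by
  have hal : a < l := lt_of_le_of_lt ha2 (by linarith)
  set x : ℝ := a / l with hxdef
  have hx1 : x < 1 := (div_lt_one hl).2 hal
  have hx2 : x ≤ 1 / 2 := by
    rw [hxdef, div_le_div_iff₀ hl two_pos]
    linarith
  have h0 : 0 < 1 - x := by linarith
  have hrew : l / (l - a) = (1 - x)⁻¹ := by
    rw [hxdef]
    field_simp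
  have hexp : a * (1/l) + 2 * a ^ 2 * (1/l) ^ 2 = x + 2 * x ^ 2 := by
    rw [hxdef]
    field_simp
  rw [hrew, hexp]
  have hu : (1 - x)⁻¹ * (1 - x) = 1 := inv_mul_cancel₀ h0.ne'
  have hupos : 0 < (1 - x)⁻¹ := inv_pos.2 h0
  have hu2 : (1 - x)⁻¹ ≤ 2 := by
    rw [inv_le_comm₀ h0 two_pos]
    linarith
  have hlog : Real.log ((1 - x)⁻¹) ≤ (1 - x)⁻¹ - 1 :=
    Real.log_le_sub_one_of_pos hupos
  have hkey : (1 - x)⁻¹ - 1 ≤ x + 2 * x ^ 2 := by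
    set u := (1 - x)⁻¹
    have hident : u - 1 - (x + 2 * x ^ 2) =
        x ^ 2 * (u - 2) + (1 + x) * (u * (1 - x) - 1) := by ring
    have h2 : u * (1 - x) - 1 = 0 := by rw [hu]; ring
    nlinarith [sq_nonneg x, mul_nonpos_of_nonneg_of_nonpos (sq_nonneg x) (by linarith : u - 2 ≤ 0)]
  calc (1 - x)⁻¹ = Real.exp (Real.log ((1 - x)⁻¹)) := (Real.exp_log hupos).symm
    _ ≤ Real.exp (x + 2 * x ^ 2) := Real.exp_le_exp.2 (le_trans hlog hkey)

lemma summable_sq_of_summable {m : ℕ → ℝ} (hm : ∀ j, 0 ≤ m j) (hsum : Summable m) :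
    Summable (fun j => m j ^ 2) := by
  obtain ⟨C, hC⟩ : ∃ C, ∀ j, m j ≤ C := by
    obtain ⟨C, hC⟩ := (hsum.tendsto_atTop_zero.bddAbove_range)
    exact ⟨C, fun j => hC (Set.mem_range_self j)⟩
  refine Summable.of_nonneg_of_le (fun j => sq_nonneg _) (fun j => ?_) (hsum.mul_left C)
  calc m j ^ 2 = m j * m j := sq (m j) ▸ by ring
    _ ≤ C * m j := mul_le_mul_of_nonneg_right (hC j) (hm j)

lemma exp_tail_aux {Ω : Type*} [MeasurableSpace Ω] (P : Measure Ω)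
    [IsProbabilityMeasure P] (n : ℕ) (h : ℕ → ℝ) (hh : ∀ j, n ≤ j → 0 < h j)
    (hsum : Summable fun j : ℕ => 1 / h (n + j))
    (r : ℕ → Ω → ℝ) (hmeas : ∀ j, Measurable (r j))
    (hindep : iIndepFun
      (fun j : {j : ℕ // n ≤ j} => r j) P)
    (hexp : ∀ j, n ≤ j → Measure.map (r j) P = expMeasure (h j))
    (R : Ω → ℝ) (hR : ∀ ω, R ω = ∑' j : ℕ, r (n + j) ω)
    (Z : ℝ) (hZ : Z = ∑' j : ℕ, 1 / h (n + j) ^ 2)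
    (s : ℝ) (a : ℝ) (hasq : a ^ 2 = s ^ 2) (ha : ∀ j, n ≤ j → a ≤ h j / 2) :
    ∫ ω, Real.exp (a * (R ω - ∫ ω', R ω' ∂P)) ∂P ≤ Real.exp (2 * s ^ 2 * Z) := by
  have hl : ∀ j : ℕ, 0 < h (n + j) := fun j => hh _ (Nat.le_add_right n j)
  have hm0 : ∀ j : ℕ, 0 ≤ 1 / h (n + j) := fun j => one_div_nonneg.2 (hl j).le
  have ha' : ∀ j, n ≤ j → a < h j := fun j hj => lt_of_le_of_lt (ha j hj) (by linarith [hh j hj])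
  -- single-variable facts
  have A : ∀ j, n ≤ j → ∫⁻ ω, ENNReal.ofReal (Real.exp (a * r j ω)) ∂P
      = ENNReal.ofReal (h j / (h j - a)) := by
    intro j hj
    have hmap : Measure.map (r j) P = expMeasure (h j) := hexp j hj
    rw [← lintegral_map (f := fun x => ENNReal.ofReal (Real.exp (a * x))) (by fun_prop)
      (hmeas j), hmap, lint_exp_expMeasure (hh j hj) (ha' j hj)]
  have B : ∀ j, n ≤ j → ∫⁻ ω, ENNReal.ofReal (r j ω) ∂P = ENNReal.ofReal (1 / h j) := by
    intro j hj
    have hmap : Measure.map (r j) P = expMeasure (h j) := hexp j hj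
    rw [← lintegral_map (f := fun x => ENNReal.ofReal x) (by fun_prop) (hmeas j), hmap,
      lint_id_expMeasure (hh j hj)]
  have Int : ∀ j, n ≤ j → Integrable (fun ω => Real.exp (a * r j ω)) P := by
    intro j hj
    refine ⟨((hmeas j).const_mul a).exp.aestronglyMeasurable, ?_⟩
    rw [hasFiniteIntegral_iff_ofReal (ae_of_all _ fun ω => (Real.exp_pos _).le), A j hj]
    exact ENNReal.ofReal_lt_top
  have mgf_eval : ∀ j, n ≤ j → mgf (r j) P a = h j / (h j - a) := by
    intro j hj
    have h1 := ofReal_integral_eq_lintegral_ofReal (Int j hj)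
      (ae_of_all _ fun ω => (Real.exp_pos _).le)
    rw [A j hj] at h1
    have h2 : (0:ℝ) ≤ ∫ ω, Real.exp (a * r j ω) ∂P :=
      integral_nonneg fun ω => (Real.exp_pos _).le
    have h3 : (0:ℝ) ≤ h j / (h j - a) :=
      div_nonneg (hh j hj).le (by linarith [ha' j hj])
    exact (ENNReal.ofReal_eq_ofReal_iff h2 h3).1 h1
  -- a.e. nonneg and summable
  have hnn : ∀ᵐ ω ∂P, ∀ j : ℕ, 0 ≤ r (n + j) ω := by
    rw [ae_all_iff]
    intro j
    have hmap : Measure.map (r (n + j)) P = expMeasure (h (n + j)) :=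
      hexp _ (Nat.le_add_right n j)
    rw [ae_iff]
    have hset : {ω | ¬ 0 ≤ r (n + j) ω} = r (n + j) ⁻¹' (Set.Iio 0) := by
      ext ω; simp [not_le]
    rw [hset, ← Measure.map_apply (hmeas _) measurableSet_Iio, hmap,
      show expMeasure (h (n + j)) =
        (volume : Measure ℝ).withDensity (exponentialPDF (h (n + j))) from rfl,
      withDensity_apply _ measurableSet_Iio]
    exact lintegral_exponentialPDF_of_nonpos le_rfl
  have hsum_lint : ∫⁻ ω, ∑' j : ℕ, ENNReal.ofReal (r (n + j) ω) ∂P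
      = ENNReal.ofReal (∑' j : ℕ, 1 / h (n + j)) := by
    rw [lintegral_tsum (fun j => ((hmeas (n + j)).ennreal_ofReal).aemeasurable)]
    have : ∀ j : ℕ, ∫⁻ ω, ENNReal.ofReal (r (n + j) ω) ∂P = ENNReal.ofReal (1 / h (n + j)) :=
      fun j => B _ (Nat.le_add_right n j)
    simp_rw [this]
    rw [← ENNReal.ofReal_tsum_of_nonneg hm0 hsum]
  have hfin : ∀ᵐ ω ∂P, ∑' j : ℕ, ENNReal.ofReal (r (n + j) ω) < ⊤ := by
    refine ae_lt_top' (AEMeasurable.ennreal_tsum fun j => ((hmeas (n + j)).ennreal_ofReal).aemeasurable) ?_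
    rw [hsum_lint]
    exact ENNReal.ofReal_ne_top
  have hgood : ∀ᵐ ω ∂P, (∀ j : ℕ, 0 ≤ r (n + j) ω) ∧ Summable (fun j => r (n + j) ω) := by
    filter_upwards [hnn, hfin] with ω h1 h2
    refine ⟨h1, ?_⟩
    have h3 := ENNReal.summable_toReal h2.ne
    refine (summable_congr fun j => ?_).1 h3
    exact ENNReal.toReal_ofReal (h1 j)
  have htendsto : ∀ᵐ ω ∂P, Filter.Tendsto (fun N => ∑ j ∈ Finset.range N, r (n + j) ω)
      Filter.atTop (nhds (R ω)) := by
    filter_upwards [hgood] with ω hω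
    rw [hR ω]
    exact hω.2.hasSum.tendsto_sum_nat
  have hRmeas : AEMeasurable R P := by
    refine aemeasurable_of_tendsto_metrizable_ae Filter.atTop
      (fun N => ?_) htendsto
    exact (Finset.measurable_sum _ fun j _ => hmeas (n + j)).aemeasurable
  set E : ℝ := ∑' j : ℕ, 1 / h (n + j) with hE
  have hE0 : 0 ≤ E := tsum_nonneg hm0
  have hER : ∫ ω, R ω ∂P = E := by
    have hnnR : 0 ≤ᵐ[P] R := by
      filter_upwards [hgood] with ω hω
      rw [hR ω]
      exact tsum_nonneg hω.1
    rw [integral_eq_lintegral_of_nonneg_ae hnnR hRmeas.aestronglyMeasurable]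
    have hcongr : (fun ω => ENNReal.ofReal (R ω))
        =ᵐ[P] (fun ω => ∑' j : ℕ, ENNReal.ofReal (r (n + j) ω)) := by
      filter_upwards [hgood] with ω hω
      rw [hR ω, ENNReal.ofReal_tsum_of_nonneg hω.1 hω.2]
    rw [lintegral_congr_ae hcongr, hsum_lint, ENNReal.toReal_ofReal hE0]
  -- finite sums
  set e : ℕ ↪ {j : ℕ // n ≤ j} :=
    ⟨fun j => ⟨n + j, Nat.le_add_right n j⟩, by
      intro x y hxy
      have := congrArg Subtype.val hxy
      simpa using this⟩ with he
  have hSsum : ∀ N : ℕ, (∑ i ∈ (Finset.range N).map e, (fun i : {j : ℕ // n ≤ j} => r ↑i) i)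
      = fun ω => ∑ j ∈ Finset.range N, r (n + j) ω := by
    intro N
    funext ω
    rw [Finset.sum_apply, Finset.sum_map]
    rfl
  have hmgfN : ∀ N : ℕ, ∫ ω, Real.exp (a * ∑ j ∈ Finset.range N, r (n + j) ω) ∂P
      = ∏ j ∈ Finset.range N, (h (n + j) / (h (n + j) - a)) := by
    intro N
    have h1 := hindep.mgf_sum (fun i => hmeas ↑i) ((Finset.range N).map e) (t := a)
    rw [hSsum N, Finset.prod_map] at h1
    simp only [mgf] at h1
    rw [h1]
    exact Finset.prod_congr rfl fun j _ => by
      have := mgf_eval (n + j) (Nat.le_add_right n j)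
      exact this
  have hIntS : ∀ N : ℕ, Integrable
      (fun ω => Real.exp (a * ∑ j ∈ Finset.range N, r (n + j) ω)) P := by
    intro N
    have h1 := hindep.integrable_exp_mul_sum (s := (Finset.range N).map e)
      (fun i => hmeas ↑i) (fun i _ => Int ↑i i.2) (t := a)
    rw [hSsum N] at h1
    exact h1
  have hlintS : ∀ N : ℕ, ∫⁻ ω, ENNReal.ofReal
        (Real.exp (a * ∑ j ∈ Finset.range N, r (n + j) ω)) ∂P
      = ENNReal.ofReal (∏ j ∈ Finset.range N, (h (n + j) / (h (n + j) - a))) := by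
    intro N
    rw [← ofReal_integral_eq_lintegral_ofReal (hIntS N)
      (ae_of_all _ fun ω => (Real.exp_pos _).le), hmgfN N]
  -- product bound
  have hprod : ∀ N : ℕ, ∏ j ∈ Finset.range N, (h (n + j) / (h (n + j) - a))
      ≤ Real.exp (a * (∑ j ∈ Finset.range N, 1 / h (n + j))
        + 2 * s ^ 2 * (∑ j ∈ Finset.range N, (1 / h (n + j)) ^ 2)) := by
    intro N
    have heq : a * (∑ j ∈ Finset.range N, 1 / h (n + j))
        + 2 * s ^ 2 * (∑ j ∈ Finset.range N, (1 / h (n + j)) ^ 2)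
        = ∑ j ∈ Finset.range N, (a * (1 / h (n + j)) + 2 * s ^ 2 * (1 / h (n + j)) ^ 2) := by
      rw [Finset.sum_add_distrib, ← Finset.mul_sum, ← Finset.mul_sum]
    rw [heq, Real.exp_sum]
    refine Finset.prod_le_prod (fun j _ => div_nonneg (hl j).le
      (by linarith [ha' (n + j) (Nat.le_add_right n j)])) (fun j _ => ?_)
    have := rate_ratio_le_exp (hl j) (ha _ (Nat.le_add_right n j))
    rw [hasq] at this
    exact this
  -- assemble
  rw [hER]
  have hmeasExp : AEStronglyMeasurable (fun ω => Real.exp (a * (R ω - E))) P := by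
    exact (Real.measurable_exp.comp_aemeasurable
      ((hRmeas.sub aemeasurable_const).const_mul a)).aestronglyMeasurable
  rw [integral_eq_lintegral_of_nonneg_ae (ae_of_all _ fun ω => (Real.exp_pos _).le) hmeasExp]
  refine ENNReal.toReal_le_of_le_ofReal (Real.exp_pos _).le ?_
  set b : ℕ → ℝ≥0∞ := fun N => ENNReal.ofReal (Real.exp
    (a * ((∑ j ∈ Finset.range N, 1 / h (n + j)) - E)
      + 2 * s ^ 2 * (∑ j ∈ Finset.range N, (1 / h (n + j)) ^ 2))) with hb
  have hfmeas : ∀ N : ℕ, AEMeasurable (fun ω => ENNReal.ofReal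
      (Real.exp (a * ((∑ j ∈ Finset.range N, r (n + j) ω) - E)))) P := by
    intro N
    exact (((Finset.measurable_sum _ fun j _ => hmeas (n + j)).sub measurable_const).const_mul
      a).exp.ennreal_ofReal.aemeasurable
  have hcongr2 : (fun ω => ENNReal.ofReal (Real.exp (a * (R ω - E))))
      =ᵐ[P] fun ω => Filter.liminf (fun N => ENNReal.ofReal
        (Real.exp (a * ((∑ j ∈ Finset.range N, r (n + j) ω) - E)))) Filter.atTop := by
    filter_upwards [htendsto] with ω hω
    have htd : Filter.Tendsto (fun N => ENNReal.ofReal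
        (Real.exp (a * ((∑ j ∈ Finset.range N, r (n + j) ω) - E)))) Filter.atTop
        (nhds (ENNReal.ofReal (Real.exp (a * (R ω - E))))) := by
      refine (ENNReal.continuous_ofReal.tendsto _).comp ?_
      refine (Real.continuous_exp.tendsto _).comp ?_
      exact (hω.sub tendsto_const_nhds).const_mul a
    exact htd.liminf_eq.symm
  rw [lintegral_congr_ae hcongr2]
  have step1 := lintegral_liminf_le' (u := Filter.atTop) hfmeas
  refine le_trans step1 ?_
  have step2 : Filter.liminf (fun N => ∫⁻ ω, ENNReal.ofReal
      (Real.exp (a * ((∑ j ∈ Finset.range N, r (n + j) ω) - E))) ∂P) Filter.atTop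
      ≤ Filter.liminf b Filter.atTop := by
    refine Filter.liminf_le_liminf (Filter.Eventually.of_forall fun N => ?_)
    have hsplit : ∀ ω : Ω, Real.exp (a * ((∑ j ∈ Finset.range N, r (n + j) ω) - E))
        = Real.exp (a * ∑ j ∈ Finset.range N, r (n + j) ω) * Real.exp (-(a * E)) := by
      intro ω
      rw [← Real.exp_add]
      congr 1
      ring
    simp_rw [hsplit]
    rw [show (fun ω : Ω => ENNReal.ofReal (Real.exp (a * ∑ j ∈ Finset.range N, r (n + j) ω)
        * Real.exp (-(a * E)))) = fun ω : Ω => ENNReal.ofReal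
          (Real.exp (a * ∑ j ∈ Finset.range N, r (n + j) ω))
        * ENNReal.ofReal (Real.exp (-(a * E))) from
      funext fun ω => ENNReal.ofReal_mul (Real.exp_pos _).le]
    rw [lintegral_mul_const _ (by fun_prop), hlintS N, hb]
    rw [← ENNReal.ofReal_mul (Finset.prod_nonneg fun j _ => div_nonneg (hl j).le
      (by linarith [ha' (n + j) (Nat.le_add_right n j)]))]
    refine ENNReal.ofReal_le_ofReal ?_
    calc (∏ j ∈ Finset.range N, (h (n + j) / (h (n + j) - a))) * Real.exp (-(a * E))
        ≤ Real.exp (a * (∑ j ∈ Finset.range N, 1 / h (n + j))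
            + 2 * s ^ 2 * (∑ j ∈ Finset.range N, (1 / h (n + j)) ^ 2))
          * Real.exp (-(a * E)) :=
          mul_le_mul_of_nonneg_right (hprod N) (Real.exp_pos _).le
      _ = Real.exp (a * ((∑ j ∈ Finset.range N, 1 / h (n + j)) - E)
            + 2 * s ^ 2 * (∑ j ∈ Finset.range N, (1 / h (n + j)) ^ 2)) := by
          rw [← Real.exp_add]
          congr 1
          ring
  refine le_trans step2 ?_
  have hZ' : Z = ∑' j : ℕ, (1 / h (n + j)) ^ 2 := by
    rw [hZ]
    exact tsum_congr fun j => by rw [div_pow, one_pow]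
  have hsq : Summable (fun j : ℕ => (1 / h (n + j)) ^ 2) := summable_sq_of_summable hm0 hsum
  have htb : Filter.Tendsto b Filter.atTop (nhds (ENNReal.ofReal (Real.exp (2 * s ^ 2 * Z)))) := by
    rw [hb]
    refine (ENNReal.continuous_ofReal.tendsto _).comp ?_
    refine (Real.continuous_exp.tendsto _).comp ?_
    have h1 : Filter.Tendsto (fun N => (∑ j ∈ Finset.range N, 1 / h (n + j)) - E)
        Filter.atTop (nhds 0) := by
      have h0 : Filter.Tendsto (fun N => ∑ j ∈ Finset.range N, 1 / h (n + j))
          Filter.atTop (nhds E) := by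
        rw [hE]
        exact hsum.hasSum.tendsto_sum_nat
      simpa using h0.sub (tendsto_const_nhds (x := E))
    have h2 : Filter.Tendsto (fun N => ∑ j ∈ Finset.range N, (1 / h (n + j)) ^ 2)
        Filter.atTop (nhds Z) := by
      rw [hZ']
      exact hsq.hasSum.tendsto_sum_nat
    have := (h1.const_mul a).add (h2.const_mul (2 * s ^ 2))
    simpa using this
  rw [htb.liminf_eq]

/-- Let `(r j)_{j ≥ n}` be independent exponential random variables with
rates `h j > 0` and `∑_{j≥n} 1/h j < ∞`.  Set `R = ∑_{j≥n} r j` and `Z = ∑_{j≥n} 1/h(j)²`.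
Then for every `s` with `0 ≤ s ≤ h j / 2` for all `j ≥ n`, both
`E[exp(s(R − E[R]))] ≤ exp(2s²Z)` and `E[exp(−s(R − E[R]))] ≤ exp(2s²Z)`. -/
theorem exponential_tail_sum_mgf_bound {Ω : Type*} [MeasurableSpace Ω] (P : Measure Ω)
    [IsProbabilityMeasure P] (n : ℕ) (h : ℕ → ℝ) (hh : ∀ j, n ≤ j → 0 < h j)
    (hsum : Summable fun j : ℕ => 1 / h (n + j))
    (r : ℕ → Ω → ℝ) (hmeas : ∀ j, Measurable (r j))
    (hindep : iIndepFun
      (fun j : {j : ℕ // n ≤ j} => r j) P)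
    (hexp : ∀ j, n ≤ j → IsExponentialRV P (r j) (h j))
    (R : Ω → ℝ) (hR : ∀ ω, R ω = ∑' j : ℕ, r (n + j) ω)
    (Z : ℝ) (hZ : Z = ∑' j : ℕ, 1 / h (n + j) ^ 2)
    (s : ℝ) (hs0 : 0 ≤ s) (hs : ∀ j, n ≤ j → s ≤ h j / 2) :
    (∫ ω, Real.exp (s * (R ω - ∫ ω', R ω' ∂P)) ∂P ≤ Real.exp (2 * s ^ 2 * Z)) ∧
      (∫ ω, Real.exp (-s * (R ω - ∫ ω', R ω' ∂P)) ∂P ≤ Real.exp (2 * s ^ 2 * Z)) := by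
  have hexp' : ∀ j, n ≤ j → Measure.map (r j) P = expMeasure (h j) := fun j hj => hexp j hj
  constructor
  · exact exp_tail_aux P n h hh hsum r hmeas hindep hexp' R hR Z hZ s s rfl hs
  · exact exp_tail_aux P n h hh hsum r hmeas hindep hexp' R hR Z hZ s (-s)
      (by ring) (fun j hj => by linarith [hs j hj])
end

section
/- Let α > 1, 0 < c₁ ≤ c₂, μ ∈ (0,1], θ > 0, and let F : (0,∞) → (0,∞) satisfy c₁x^α ≤ F(x) ≤ c₂x^α for all x > 0. Let (r(j))_{j≥0} be independent exponential random variables with E[r(j)] = 1/(μ F(j + θ)), and for each n let R_n = ∑_{j=n}^∞ r(j). Then there exists n₀ such that for all n > n₀, P(|R_n / E[R_n] − 1| > n^{-1/4}) ≤ e^{-n^{1/4}}. -/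
open MeasureTheory ProbabilityTheory


open MeasureTheory ProbabilityTheory Real Set Filter
open scoped ENNReal NNReal

namespace ExpAux

lemma ineq_upper {x : ℝ} (h0 : 0 ≤ x) (h2 : x ≤ 1/2) : 1/(1-x) ≤ Real.exp (x + 2*x^2) := by
  have h1 : (0:ℝ) < 1 - x := by linarith
  have key : 1/(1-x) ≤ 1 + (x + 2*x^2) := by
    rw [div_le_iff₀ h1]; nlinarith
  calc 1/(1-x) ≤ 1 + (x + 2*x^2) := key
    _ ≤ Real.exp (x + 2*x^2) := by
        have := Real.add_one_le_exp (x + 2*x^2); linarith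

lemma ineq_lower {x : ℝ} (h0 : 0 ≤ x) : 1/(1+x) ≤ Real.exp (-x + x^2) := by
  have h1 : (0:ℝ) < 1 + x := by linarith
  rw [div_le_iff₀ h1, ← Real.exp_log h1]
  rw [← Real.exp_add]
  have : (0:ℝ) ≤ -x + x^2 + Real.log (1+x) := by
    have hlog : x - x^2 ≤ Real.log (1+x) := by
      have h2 : (0:ℝ) < 1 + x := h1
      rcases le_or_gt (x - x^2) 0 with h | h
      · calc x - x^2 ≤ 0 := h
          _ ≤ Real.log (1+x) := Real.log_nonneg (by linarith)
      · -- x - x^2 > 0, so x < 1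
        have hx1 : x < 1 := by nlinarith
        have := Real.add_one_le_exp (-(x - x^2))
        -- 1 - (x-x^2) ≤ exp(-(x-x^2)), so exp(x-x^2) ≤ 1/(1-(x-x^2))
        have hpos : (0:ℝ) < 1 - (x - x^2) := by nlinarith
        have hexp : Real.exp (x - x^2) ≤ 1/(1 - (x - x^2)) := by
          rw [le_div_iff₀ hpos]
          have h3 := Real.add_one_le_exp (-(x - x^2))
          calc Real.exp (x - x^2) * (1 - (x - x^2))
              = Real.exp (x - x^2) * (-(x - x^2) + 1) := by ring
            _ ≤ Real.exp (x - x^2) * Real.exp (-(x - x^2)) := by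
                have := Real.add_one_le_exp (-(x-x^2))
                exact mul_le_mul_of_nonneg_left (by linarith) (Real.exp_pos _).le
            _ = 1 := by rw [← Real.exp_add]; ring_nf; exact Real.exp_zero
        have hle : 1/(1 - (x - x^2)) ≤ 1 + x := by
          rw [div_le_iff₀ hpos]; nlinarith
        have := hexp.trans hle
        calc x - x^2 = Real.log (Real.exp (x - x^2)) := (Real.log_exp _).symm
          _ ≤ Real.log (1+x) := Real.log_le_log (Real.exp_pos _) this
    linarith
  calc (1:ℝ) = Real.exp 0 := Real.exp_zero.symm
    _ ≤ Real.exp (-x + x^2 + Real.log (1+x)) := Real.exp_le_exp.mpr this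

lemma integral_exp_neg_mul {b : ℝ} (hb : 0 < b) :
    ∫ x in Ioi (0:ℝ), Real.exp (-(b*x)) = 1/b := by
  have h := Real.integral_rpow_mul_exp_neg_mul_Ioi (zero_lt_one) hb
  simp only [sub_self, Real.rpow_zero, one_mul, Real.rpow_one, Real.Gamma_one, mul_one] at h
  exact h

lemma integral_id_exp_neg_mul {b : ℝ} (hb : 0 < b) :
    ∫ x in Ioi (0:ℝ), x * Real.exp (-(b*x)) = 1/b^2 := by
  have h := Real.integral_rpow_mul_exp_neg_mul_Ioi (by norm_num : (0:ℝ) < 2) hb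
  norm_num [Real.Gamma_two, Real.rpow_one] at h
  rw [h, inv_eq_one_div]

lemma integrableOn_id_exp_neg_mul {b : ℝ} (hb : 0 < b) :
    IntegrableOn (fun x => x * Real.exp (-(b*x))) (Ioi (0:ℝ)) := by
  by_contra hni
  have h := integral_id_exp_neg_mul hb
  rw [MeasureTheory.integral_undef hni] at h
  have : (0:ℝ) < 1/b^2 := by positivity
  linarith [h ▸ this]

lemma measurable_expPDF (l : ℝ) : Measurable (exponentialPDF l) :=
  (measurable_exponentialPDFReal l).ennreal_ofReal

lemma expMeasure_eq (l : ℝ) : expMeasure l = volume.withDensity (exponentialPDF l) := rfl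

lemma lintegral_expMeasure (l : ℝ) {g : ℝ → ℝ≥0∞} (hg : Measurable g) :
    ∫⁻ x, g x ∂(expMeasure l) =
      ∫⁻ x in Ici (0:ℝ), ENNReal.ofReal (l * Real.exp (-(l*x))) * g x := by
  rw [expMeasure_eq, lintegral_withDensity_eq_lintegral_mul _ (measurable_expPDF l) hg]
  rw [← lintegral_add_compl (μ := volume) (fun a => (exponentialPDF l * g) a) measurableSet_Ici]
  have h0 : ∫⁻ x in (Ici (0:ℝ))ᶜ, (exponentialPDF l * g) x = 0 := by
    rw [compl_Ici]
    rw [setLIntegral_congr_fun (g := fun _ => 0) measurableSet_Iio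
      (fun x (hx : x < 0) => by simp [Pi.mul_apply, exponentialPDF_of_neg hx])]
    simp
  rw [h0, add_zero]
  refine setLIntegral_congr_fun measurableSet_Ici (fun x (hx : 0 ≤ x) => ?_)
  simp [Pi.mul_apply, exponentialPDF_of_nonneg hx]

lemma expMeasure_Iio (l : ℝ) : expMeasure l (Iio 0) = 0 := by
  rw [expMeasure_eq, withDensity_apply _ measurableSet_Iio]
  exact lintegral_exponentialPDF_of_nonpos le_rfl

lemma expMeasure_ae_nonneg (l : ℝ) : ∀ᵐ x ∂(expMeasure l), 0 ≤ x := by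
  rw [ae_iff]
  have : {x : ℝ | ¬ 0 ≤ x} = Iio 0 := by ext x; simp
  rw [this]; exact expMeasure_Iio l

lemma lintegral_exp_expMeasure {l t : ℝ} (hl : 0 < l) (ht : t < l) :
    ∫⁻ x, ENNReal.ofReal (Real.exp (t*x)) ∂(expMeasure l) = ENNReal.ofReal (l/(l-t)) := by
  rw [lintegral_expMeasure l (g := fun x => ENNReal.ofReal (Real.exp (t*x))) (by fun_prop)]
  have hlt : 0 < l - t := by linarith
  have hcongr : ∀ x ∈ Ici (0:ℝ),
      ENNReal.ofReal (l * Real.exp (-(l*x))) * ENNReal.ofReal (Real.exp (t*x))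
        = ENNReal.ofReal (l * Real.exp (-((l-t)*x))) := by
    intro x _
    rw [← ENNReal.ofReal_mul (by positivity)]
    congr 1
    rw [mul_assoc, ← Real.exp_add]
    ring_nf
  rw [setLIntegral_congr_fun measurableSet_Ici hcongr]
  have hint : IntegrableOn (fun x => l * Real.exp (-((l-t)*x))) (Ici (0:ℝ)) := by
    rw [integrableOn_Ici_iff_integrableOn_Ioi]
    have := (exp_neg_integrableOn_Ioi 0 hlt).const_mul l
    have heq : (fun x => l * rexp (-(l - t) * x)) = (fun x => l * Real.exp (-((l-t)*x))) := by
      funext x; ring_nf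
    rwa [heq] at this
  rw [← ofReal_integral_eq_lintegral_ofReal hint (ae_of_all _ fun x => by positivity)]
  congr 1
  rw [integral_Ici_eq_integral_Ioi, MeasureTheory.integral_const_mul,
    integral_exp_neg_mul hlt]
  field_simp

lemma lintegral_id_expMeasure {l : ℝ} (hl : 0 < l) :
    ∫⁻ x, ENNReal.ofReal x ∂(expMeasure l) = ENNReal.ofReal (1/l) := by
  rw [lintegral_expMeasure l (g := fun x => ENNReal.ofReal x) (by fun_prop)]
  have hcongr : ∀ x ∈ Ici (0:ℝ),
      ENNReal.ofReal (l * Real.exp (-(l*x))) * ENNReal.ofReal x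
        = ENNReal.ofReal (l * (x * Real.exp (-(l*x)))) := by
    intro x hx
    rw [← ENNReal.ofReal_mul (by positivity)]
    congr 1; ring
  rw [setLIntegral_congr_fun measurableSet_Ici hcongr]
  have hint : IntegrableOn (fun x => l * (x * Real.exp (-(l*x)))) (Ici (0:ℝ)) := by
    rw [integrableOn_Ici_iff_integrableOn_Ioi]
    exact (integrableOn_id_exp_neg_mul hl).const_mul l
  rw [← ofReal_integral_eq_lintegral_ofReal hint ?_]
  · congr 1
    rw [integral_Ici_eq_integral_Ioi, MeasureTheory.integral_const_mul,
      integral_id_exp_neg_mul hl]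
    field_simp
  · rw [EventuallyLE, ae_restrict_iff' measurableSet_Ici]
    exact ae_of_all _ (fun x (hx : 0 ≤ x) => by positivity)


section RV
variable {Ω : Type*} [MeasurableSpace Ω] {P : Measure Ω} {X : Ω → ℝ} {l t : ℝ}

lemma rv_lint_exp (hX : Measurable X) (hmap : Measure.map X P = expMeasure l)
    (hl : 0 < l) (ht : t < l) :
    ∫⁻ ω, ENNReal.ofReal (Real.exp (t * X ω)) ∂P = ENNReal.ofReal (l/(l-t)) := by
  rw [← lintegral_exp_expMeasure hl ht, ← hmap,
    lintegral_map (by fun_prop) hX]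

lemma rv_integrable_exp (hX : Measurable X) (hmap : Measure.map X P = expMeasure l)
    (hl : 0 < l) (ht : t < l) :
    Integrable (fun ω => Real.exp (t * X ω)) P := by
  refine ⟨((hX.const_mul t).exp).aestronglyMeasurable, ?_⟩
  rw [hasFiniteIntegral_iff_ofReal (ae_of_all _ fun ω => (Real.exp_pos _).le),
    rv_lint_exp hX hmap hl ht]
  exact ENNReal.ofReal_lt_top

lemma rv_mgf (hX : Measurable X) (hmap : Measure.map X P = expMeasure l)
    (hl : 0 < l) (ht : t < l) :
    mgf X P t = l/(l-t) := by
  rw [mgf, integral_eq_lintegral_of_nonneg_ae (ae_of_all _ fun ω => (Real.exp_pos _).le)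
      ((hX.const_mul t).exp).aestronglyMeasurable,
    rv_lint_exp hX hmap hl ht, ENNReal.toReal_ofReal]
  have : 0 < l - t := by linarith
  positivity

lemma rv_nonneg (hX : Measurable X) (hmap : Measure.map X P = expMeasure l) :
    ∀ᵐ ω ∂P, 0 ≤ X ω := by
  rw [ae_iff]
  have h1 : {ω | ¬ 0 ≤ X ω} = X ⁻¹' (Iio 0) := by ext ω; simp
  rw [h1, ← Measure.map_apply hX measurableSet_Iio, hmap]
  exact expMeasure_Iio l

lemma rv_lint_nnnorm (hX : Measurable X) (hmap : Measure.map X P = expMeasure l)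
    (hl : 0 < l) :
    ∫⁻ ω, ‖X ω‖₊ ∂P = ENNReal.ofReal (1/l) := by
  have h1 : ∫⁻ ω, ‖X ω‖₊ ∂P = ∫⁻ x, ‖x‖₊ ∂(expMeasure l) := by
    rw [← hmap, lintegral_map (by fun_prop) hX]
  rw [h1, ← lintegral_id_expMeasure hl]
  refine lintegral_congr_ae ?_
  filter_upwards [expMeasure_ae_nonneg l] with x hx
  exact Real.enorm_eq_ofReal hx

lemma rv_integral (hX : Measurable X) (hmap : Measure.map X P = expMeasure l)
    (hl : 0 < l) :
    ∫ ω, X ω ∂P = 1/l := by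
  have h1 : ∫ ω, X ω ∂P = ∫ x, x ∂(expMeasure l) := by
    rw [← hmap]
    exact (integral_map (f := fun x : ℝ => x) hX.aemeasurable aestronglyMeasurable_id).symm
  rw [h1, integral_eq_lintegral_of_nonneg_ae (expMeasure_ae_nonneg l)
      aestronglyMeasurable_id, lintegral_id_expMeasure hl, ENNReal.toReal_ofReal]
  positivity

end RV

end ExpAux


set_option maxHeartbeats 1000000

/-- Let `α > 1`, `0 < c₁ ≤ c₂`, `μ ∈ (0,1]`, `θ > 0`, and
`c₁ x^α ≤ F x ≤ c₂ x^α` on `(0,∞)`.  Let `r j` be independent exponentials with mean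
`1/(μ F(j+θ))` and `R n = ∑_{j≥n} r j`.  Then there is `n₀` such that for all `n > n₀`,
`P(|R n / E[R n] − 1| > n^{-1/4}) ≤ e^{-n^{1/4}}`. -/
theorem exponential_tail_relative_concentration {Ω : Type*} [MeasurableSpace Ω]
    (P : Measure Ω) [IsProbabilityMeasure P]
    (α c₁ c₂ μ θ : ℝ) (hα : 1 < α) (hc₁ : 0 < c₁) (hc : c₁ ≤ c₂)
    (hμ : μ ∈ Set.Ioc (0 : ℝ) 1) (hθ : 0 < θ)
    (F : ℝ → ℝ) (hF : ∀ x > (0 : ℝ), c₁ * x ^ α ≤ F x ∧ F x ≤ c₂ * x ^ α)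
    (r : ℕ → Ω → ℝ) (hmeas : ∀ j, Measurable (r j))
    (hindep : iIndepFun r P)
    (hexp : ∀ j : ℕ, IsExponentialRV P (r j) (μ * F (j + θ)))
    (R : ℕ → Ω → ℝ) (hR : ∀ n ω, R n ω = ∑' j : ℕ, r (n + j) ω) :
    ∃ n₀ : ℕ, ∀ n : ℕ, n₀ < n →
      P {ω | |R n ω / (∫ ω', R n ω' ∂P) - 1| > (n : ℝ) ^ (-(1 : ℝ) / 4)} ≤
        ENNReal.ofReal (Real.exp (-(n : ℝ) ^ ((1 : ℝ) / 4))) := by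
  obtain ⟨hμ0, hμ1⟩ := hμ
  have hc₂ : 0 < c₂ := lt_of_lt_of_le hc₁ hc
  -- rates
  set lam : ℕ → ℝ := fun i => μ * F ((i : ℝ) + θ) with hlam_def
  have hbase : ∀ i : ℕ, (0:ℝ) < (i:ℝ) + θ := fun i => by positivity
  have hlam_lb : ∀ i : ℕ, μ * (c₁ * ((i:ℝ)+θ)^α) ≤ lam i := fun i =>
    mul_le_mul_of_nonneg_left (hF _ (hbase i)).1 hμ0.le
  have hlam_ub : ∀ i : ℕ, lam i ≤ μ * (c₂ * ((i:ℝ)+θ)^α) := fun i =>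
    mul_le_mul_of_nonneg_left (hF _ (hbase i)).2 hμ0.le
  have hlam_pos : ∀ i : ℕ, 0 < lam i := fun i =>
    lt_of_lt_of_le (by have := hbase i; positivity) (hlam_lb i)
  have hmap : ∀ j : ℕ, Measure.map (r j) P = expMeasure (lam j) := fun j => hexp j
  have hinvpos : ∀ i : ℕ, 0 < 1 / lam i := fun i => by
    have := hlam_pos i; positivity
  -- summability of reciprocals
  have hsum : Summable (fun i : ℕ => 1 / lam i) := by
    have hS : Summable (fun i : ℕ => (1/(μ*c₁)) * (1 / |(i:ℝ) + θ| ^ α)) :=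
      ((Real.summable_one_div_nat_add_rpow θ α).mpr hα).mul_left _
    refine Summable.of_nonneg_of_le (fun i => (hinvpos i).le) (fun i => ?_) hS
    have h1 : 1 / lam i ≤ 1 / (μ * (c₁ * ((i:ℝ)+θ)^α)) :=
      one_div_le_one_div_of_le (by have := hbase i; positivity) (hlam_lb i)
    refine h1.trans (le_of_eq ?_)
    rw [abs_of_pos (hbase i)]
    have h2 : ((i:ℝ)+θ)^α ≠ 0 := by
      have := Real.rpow_pos_of_pos (hbase i) α; positivity
    field_simp
  have hsumtail : ∀ n : ℕ, Summable (fun j : ℕ => 1 / lam (n + j)) := by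
    intro n
    have := (summable_nat_add_iff (f := fun i => 1 / lam i) n).mpr hsum
    refine this.congr fun j => by rw [add_comm]
  -- good event
  have hofR : ∀ j : ℕ, ∫⁻ ω, ENNReal.ofReal (r j ω) ∂P = ENNReal.ofReal (1 / lam j) := fun j => by
    rw [← ExpAux.lintegral_id_expMeasure (hlam_pos j), ← hmap j,
      lintegral_map (by fun_prop) (hmeas j)]
  have hG : ∀ᵐ ω ∂P, (∀ j, 0 ≤ r j ω) ∧ Summable (fun j : ℕ => r j ω) := by
    have htot : ∫⁻ ω, ∑' j, ENNReal.ofReal (r j ω) ∂P = ∑' j, ENNReal.ofReal (1 / lam j) := by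
      rw [lintegral_tsum (fun j => ((hmeas j).ennreal_ofReal).aemeasurable)]
      exact tsum_congr hofR
    have hne : (∑' j : ℕ, ENNReal.ofReal (1 / lam j)) ≠ ⊤ := by
      rw [← ENNReal.ofReal_tsum_of_nonneg (fun j => (hinvpos j).le) hsum]
      exact ENNReal.ofReal_ne_top
    have hfin : ∀ᵐ ω ∂P, (∑' j : ℕ, ENNReal.ofReal (r j ω)) < ⊤ :=
      ae_lt_top (Measurable.ennreal_tsum fun j => (hmeas j).ennreal_ofReal) (htot ▸ hne)
    have hnn : ∀ᵐ ω ∂P, ∀ j, 0 ≤ r j ω :=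
      ae_all_iff.mpr fun j => ExpAux.rv_nonneg (hmeas j) (hmap j)
    filter_upwards [hfin, hnn] with ω h1 h2
    refine ⟨h2, ?_⟩
    have h3 := ENNReal.summable_toReal h1.ne
    refine h3.congr fun j => ?_
    rw [ENNReal.toReal_ofReal (h2 j)]
  have hGtail : ∀ᵐ ω ∂P, (∀ j, 0 ≤ r j ω) ∧ ∀ n : ℕ, Summable (fun j : ℕ => r (n + j) ω) := by
    filter_upwards [hG] with ω hω
    refine ⟨hω.1, fun n => ?_⟩
    have := (summable_nat_add_iff (f := fun i => r i ω) n).mpr hω.2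
    exact this.congr fun j => by rw [add_comm]
  -- constant K
  set K : ℝ := c₁/c₂ * ((1:ℝ)/3)^α with hK_def
  have hK : 0 < K := by positivity
  -- choice of n₀
  have hev : ∀ᶠ m : ℕ in Filter.atTop,
      (16/K)*(1 + Real.log 2) ≤ (m:ℝ)^((1:ℝ)/4) := by
    have h1 : Filter.Tendsto (fun m : ℕ => (m:ℝ)^((1:ℝ)/4)) Filter.atTop Filter.atTop :=
      (tendsto_rpow_atTop (by norm_num)).comp tendsto_natCast_atTop_atTop
    exact h1.eventually_ge_atTop _
  obtain ⟨n₀, hn₀⟩ := Filter.eventually_atTop.mp (hev.and (Filter.eventually_ge_atTop 1))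
  refine ⟨n₀, fun n hn => ?_⟩
  obtain ⟨hcond2, hcond1⟩ := hn₀ n hn.le
  have hn1 : (1:ℝ) ≤ (n:ℝ) := by exact_mod_cast hcond1
  have hnpos : (0:ℝ) < n := by linarith
  -- basic quantities
  set δ : ℝ := (n:ℝ) ^ (-(1:ℝ) / 4) with hδ_def
  have hδpos : 0 < δ := Real.rpow_pos_of_pos hnpos _
  have hδ1 : δ ≤ 1 := Real.rpow_le_one_of_one_le_of_nonpos hn1 (by norm_num)
  set L : ℝ := μ * (c₁ * (((n:ℝ)+θ))^α) with hL_def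
  have hL : 0 < L := by have := hbase n; positivity
  have hLle : ∀ i : ℕ, n ≤ i → L ≤ lam i := by
    intro i hi
    refine le_trans ?_ (hlam_lb i)
    rw [hL_def]
    have h2 : ((n:ℝ)+θ)^α ≤ ((i:ℝ)+θ)^α :=
      Real.rpow_le_rpow (hbase n).le (by have : (n:ℝ) ≤ i := Nat.cast_le.mpr hi; linarith)
        (by linarith)
    exact mul_le_mul_of_nonneg_left (mul_le_mul_of_nonneg_left h2 hc₁.le) hμ0.le
  set t : ℝ := δ * L / 4 with ht_def
  have ht0 : 0 < t := by positivity
  have htL : t < L := by nlinarith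
  have htlam : ∀ i : ℕ, n ≤ i → t < lam i := fun i hi => lt_of_lt_of_le htL (hLle i hi)
  -- the mean
  set m : ℝ := ∫ ω', R n ω' ∂P with hm_def
  have hm : m = ∑' j : ℕ, 1 / lam (n + j) := by
    have hne : (∑' j : ℕ, ∫⁻ ω, ‖r (n+j) ω‖₊ ∂P) ≠ ⊤ := by
      have he : ∀ j : ℕ, ∫⁻ ω, ‖r (n+j) ω‖₊ ∂P = ENNReal.ofReal (1/lam (n+j)) := fun j =>
        ExpAux.rv_lint_nnnorm (hmeas (n+j)) (hmap (n+j)) (hlam_pos (n+j))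
      rw [tsum_congr he,
        ← ENNReal.ofReal_tsum_of_nonneg (fun j => (hinvpos _).le) (hsumtail n)]
      exact ENNReal.ofReal_ne_top
    rw [hm_def]
    calc ∫ ω', R n ω' ∂P = ∫ ω', ∑' j : ℕ, r (n+j) ω' ∂P :=
          integral_congr_ae (ae_of_all _ fun ω => hR n ω)
      _ = ∑' j : ℕ, ∫ ω', r (n+j) ω' ∂P :=
          integral_tsum (fun j => (hmeas (n+j)).aestronglyMeasurable) hne
      _ = ∑' j : ℕ, 1 / lam (n+j) := tsum_congr fun j =>
          ExpAux.rv_integral (hmeas (n+j)) (hmap (n+j)) (hlam_pos (n+j))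
  have hm_pos : 0 < m := by
    rw [hm]
    calc (0:ℝ) < 1 / lam (n+0) := hinvpos _
      _ ≤ ∑' j : ℕ, 1 / lam (n + j) := Summable.le_tsum (hsumtail n) 0 (fun j _ => (hinvpos _).le)
  -- measurability of R n
  have hRae : AEMeasurable (R n) P := by
    refine ⟨fun ω => (∑' j : ℕ, ENNReal.ofReal (r (n+j) ω)).toReal,
      (Measurable.ennreal_tsum fun j => (hmeas (n+j)).ennreal_ofReal).ennreal_toReal, ?_⟩
    filter_upwards [hGtail] with ω hω
    rw [hR n ω, ← ENNReal.ofReal_tsum_of_nonneg (fun j => hω.1 (n+j)) (hω.2 n),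
      ENNReal.toReal_ofReal (tsum_nonneg fun j => hω.1 (n+j))]
  -- partial sums facts
  have hico : ∀ k : ℕ, ∀ ω : Ω, (∑ i ∈ Finset.Ico n (n+k), r i) ω
      = ∑ j ∈ Finset.range k, r (n + j) ω := by
    intro k ω
    rw [Finset.sum_apply]
    rw [Finset.sum_Ico_eq_sum_range]
    simp
  have hico_inv : ∀ k : ℕ, ∑ i ∈ Finset.Ico n (n+k), 1 / lam i
      = ∑ j ∈ Finset.range k, 1 / lam (n + j) := by
    intro k
    rw [Finset.sum_Ico_eq_sum_range]
    simp
  have hqle : ∀ k : ℕ, ∑ j ∈ Finset.range k, 1 / lam (n + j) ≤ m := fun k =>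
    hm ▸ Summable.sum_le_tsum _ (fun j _ => (hinvpos _).le) (hsumtail n)
  -- upper-tail mgf factor bound
  have hfactor_up : ∀ i : ℕ, n ≤ i →
      lam i / (lam i - t) ≤ Real.exp ((t + 2*t^2/L) * (1 / lam i)) := by
    intro i hi
    have hli := hlam_pos i
    have hLi := hLle i hi
    have hx0 : 0 ≤ t / lam i := by positivity
    have hx2 : t / lam i ≤ 1/2 := by
      have h1 : t / lam i ≤ t / L := div_le_div_of_nonneg_left ht0.le hL hLi
      have h2 : t / L = δ/4 := by rw [ht_def]; field_simp
      rw [h2] at h1; linarith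
    have heq : lam i / (lam i - t) = 1/(1 - t/lam i) := by
      rw [one_sub_div hli.ne', one_div_div]
    rw [heq]
    refine (ExpAux.ineq_upper hx0 hx2).trans (Real.exp_le_exp.mpr ?_)
    have hsq : (t/lam i)^2 ≤ t^2/(L*lam i) := by
      rw [div_pow]
      exact div_le_div_of_nonneg_left (sq_nonneg t) (by positivity)
        (by nlinarith)
    have hrhs : (t + 2*t^2/L)*(1/lam i) = t/lam i + 2*(t^2/(L*lam i)) := by
      field_simp
    rw [hrhs]; linarith
  have hfactor_low : ∀ i : ℕ, n ≤ i →
      lam i / (lam i + t) ≤ Real.exp ((-t + t^2/L) * (1 / lam i)) := by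
    intro i hi
    have hli := hlam_pos i
    have hLi := hLle i hi
    have hx0 : 0 ≤ t / lam i := by positivity
    have heq : lam i / (lam i + t) = 1/(1 + t/lam i) := by
      rw [one_add_div hli.ne', one_div_div]
    rw [heq]
    refine (ExpAux.ineq_lower hx0).trans (Real.exp_le_exp.mpr ?_)
    have hsq : (t/lam i)^2 ≤ t^2/(L*lam i) := by
      rw [div_pow]
      exact div_le_div_of_nonneg_left (sq_nonneg t) (by positivity)
        (by nlinarith)
    have hrhs : (-t + t^2/L)*(1/lam i) = -(t/lam i) + t^2/(L*lam i) := by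
      field_simp
    rw [hrhs]; linarith
  -- upper tail
  have hup : P {ω | (1+δ)*m ≤ R n ω} ≤ ENNReal.ofReal (Real.exp (-(δ^2*L*m)/8)) := by
    have hexp_nonneg : ∀ (x : ℝ), (0:ℝ) ≤ Real.exp x := fun x => (Real.exp_pos x).le
    set g : ℕ → Ω → ENNReal :=
      fun k ω => ENNReal.ofReal (Real.exp (t * (∑ i ∈ Finset.Ico n (n+k), r i) ω)) with hg_def
    have hgeq : ∀ k ω, g k ω = ENNReal.ofReal
        (Real.exp (t * ∑ j ∈ Finset.range k, r (n+j) ω)) := fun k ω => by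
      simp only [hg_def]; rw [hico k ω]
    have hgmeas : ∀ k, Measurable (g k) := fun k => by
      simp only [hg_def, Finset.sum_apply]
      exact ((Finset.measurable_sum _ (fun i _ => hmeas i)).const_mul t).exp.ennreal_ofReal
    have hintk : ∀ k, Integrable
        (fun ω => Real.exp (t * (∑ i ∈ Finset.Ico n (n+k), r i) ω)) P := fun k =>
      hindep.integrable_exp_mul_sum hmeas (s := Finset.Ico n (n+k)) (fun i hi =>
        ExpAux.rv_integrable_exp (hmeas i) (hmap i) (hlam_pos i)
          (htlam i (Finset.mem_Ico.mp hi).1))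
    have hBnn : (0:ℝ) ≤ (t + 2*t^2/L)*m := by positivity
    have hmgfk : ∀ k, ∫⁻ ω, g k ω ∂P ≤ ENNReal.ofReal (Real.exp ((t + 2*t^2/L)*m)) := by
      intro k
      have h1 : ∫⁻ ω, g k ω ∂P = ENNReal.ofReal
          (∫ ω, Real.exp (t * (∑ i ∈ Finset.Ico n (n+k), r i) ω) ∂P) :=
        (ofReal_integral_eq_lintegral_ofReal (hintk k)
          (ae_of_all _ fun ω => hexp_nonneg _)).symm
      have h2 : ∫ ω, Real.exp (t * (∑ i ∈ Finset.Ico n (n+k), r i) ω) ∂P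
          = mgf (∑ i ∈ Finset.Ico n (n+k), r i) P t := rfl
      have h3 : mgf (∑ i ∈ Finset.Ico n (n+k), r i) P t
          = ∏ i ∈ Finset.Ico n (n+k), (lam i/(lam i - t)) := by
        rw [hindep.mgf_sum hmeas]
        exact Finset.prod_congr rfl fun i hi =>
          ExpAux.rv_mgf (hmeas i) (hmap i) (hlam_pos i) (htlam i (Finset.mem_Ico.mp hi).1)
      have h4 : ∏ i ∈ Finset.Ico n (n+k), (lam i/(lam i - t))
          ≤ ∏ i ∈ Finset.Ico n (n+k), Real.exp ((t + 2*t^2/L) * (1/lam i)) :=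
        Finset.prod_le_prod (fun i hi => div_nonneg (hlam_pos i).le
          (by have := htlam i (Finset.mem_Ico.mp hi).1; linarith))
          (fun i hi => hfactor_up i (Finset.mem_Ico.mp hi).1)
      have h5 : ∏ i ∈ Finset.Ico n (n+k), Real.exp ((t + 2*t^2/L)*(1/lam i))
          = Real.exp ((t + 2*t^2/L) * ∑ i ∈ Finset.Ico n (n+k), 1/lam i) := by
        rw [← Real.exp_sum, ← Finset.mul_sum]
      have h6 : (t + 2*t^2/L) * ∑ i ∈ Finset.Ico n (n+k), 1/lam i ≤ (t + 2*t^2/L)*m := by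
        refine mul_le_mul_of_nonneg_left ?_ (by positivity)
        rw [hico_inv]; exact hqle _
      rw [h1, h2, h3]
      exact ENNReal.ofReal_le_ofReal (h4.trans ((h5 ▸ Real.exp_le_exp.mpr h6)))
    have hptwise : ∀ᵐ ω ∂P,
        ENNReal.ofReal (Real.exp (t * R n ω)) ≤ ⨆ k, g k ω := by
      filter_upwards [hGtail] with ω hω
      have hs := hω.2 n
      have htend0 : Filter.Tendsto (fun k => ∑ j ∈ Finset.range k, r (n+j) ω)
          Filter.atTop (nhds (R n ω)) := by
        rw [hR n ω]; exact hs.hasSum.tendsto_sum_nat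
      have htend : Filter.Tendsto (fun k => g k ω) Filter.atTop
          (nhds (ENNReal.ofReal (Real.exp (t * R n ω)))) := by
        have h1 := htend0.const_mul t
        have h2 := (Real.continuous_exp.tendsto _).comp h1
        have h3 := (ENNReal.continuous_ofReal.tendsto _).comp h2
        exact h3.congr fun k => (hgeq k ω).symm
      exact le_of_tendsto' htend fun k => le_iSup (fun k => g k ω) k
    have hmono : ∀ᵐ ω ∂P, Monotone fun k => g k ω := by
      filter_upwards [hGtail] with ω hω
      intro a b hab
      simp only
      rw [hgeq a ω, hgeq b ω]
      refine ENNReal.ofReal_le_ofReal (Real.exp_le_exp.mpr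
        (mul_le_mul_of_nonneg_left ?_ ht0.le))
      exact Finset.sum_le_sum_of_subset_of_nonneg
        (Finset.range_subset_range.mpr hab) (fun j _ _ => hω.1 (n+j))
    have hlintR : ∫⁻ ω, ENNReal.ofReal (Real.exp (t * R n ω)) ∂P
        ≤ ENNReal.ofReal (Real.exp ((t + 2*t^2/L)*m)) := by
      calc ∫⁻ ω, ENNReal.ofReal (Real.exp (t * R n ω)) ∂P
          ≤ ∫⁻ ω, ⨆ k, g k ω ∂P := lintegral_mono_ae hptwise
        _ = ⨆ k, ∫⁻ ω, g k ω ∂P := lintegral_iSup' (fun k => (hgmeas k).aemeasurable) hmono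
        _ ≤ _ := iSup_le hmgfk
    have hintR : Integrable (fun ω => Real.exp (t * R n ω)) P := by
      refine ⟨(Real.measurable_exp.comp_aemeasurable
        (hRae.const_mul t)).aestronglyMeasurable, ?_⟩
      rw [hasFiniteIntegral_iff_ofReal (ae_of_all _ fun ω => hexp_nonneg _)]
      exact lt_of_le_of_lt hlintR ENNReal.ofReal_lt_top
    have hmgfR : mgf (R n) P t ≤ Real.exp ((t + 2*t^2/L)*m) := by
      rw [mgf, integral_eq_lintegral_of_nonneg_ae (ae_of_all _ fun ω => hexp_nonneg _)
        hintR.1]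
      exact ENNReal.toReal_le_of_le_ofReal (hexp_nonneg _) hlintR
    have hch := measure_ge_le_exp_mul_mgf (μ := P) (X := R n) ((1+δ)*m) ht0.le hintR
    have hbound : (P {ω | (1+δ)*m ≤ R n ω}).toReal ≤ Real.exp (-(δ^2*L*m)/8) := by
      refine hch.trans ?_
      calc Real.exp (-t*((1+δ)*m)) * mgf (R n) P t
          ≤ Real.exp (-t*((1+δ)*m)) * Real.exp ((t + 2*t^2/L)*m) :=
            mul_le_mul_of_nonneg_left hmgfR (hexp_nonneg _)
        _ = Real.exp (-t*((1+δ)*m) + (t + 2*t^2/L)*m) := (Real.exp_add _ _).symm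
        _ ≤ Real.exp (-(δ^2*L*m)/8) := by
            refine Real.exp_le_exp.mpr (le_of_eq ?_)
            rw [ht_def]; field_simp; ring
    exact (ENNReal.le_ofReal_iff_toReal_le (measure_ne_top P _) (hexp_nonneg _)).mpr hbound
  -- lower tail
  have hlow : P {ω | R n ω ≤ (1-δ)*m} ≤ ENNReal.ofReal (Real.exp (-(δ^2*L*m)/16)) := by
    have hexp_nonneg : ∀ (x : ℝ), (0:ℝ) ≤ Real.exp x := fun x => (Real.exp_pos x).le
    -- choose k₀ with partial sum of means close to m
    have htendq : Filter.Tendsto (fun k => ∑ j ∈ Finset.range k, 1/lam (n+j))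
        Filter.atTop (nhds m) := by
      rw [hm]; exact (hsumtail n).hasSum.tendsto_sum_nat
    have hlt : (1 - δ/2)*m < m := by nlinarith
    obtain ⟨k₀, hk₀⟩ := (htendq.eventually (eventually_gt_nhds hlt)).exists
    have hmem : ∀ i ∈ Finset.Ico n (n+k₀), n ≤ i := fun i hi => (Finset.mem_Ico.mp hi).1
    have hntlam : ∀ i : ℕ, -t < lam i := fun i => by
      have := hlam_pos i; linarith
    have hintlow : Integrable
        (fun ω => Real.exp (-t * (∑ i ∈ Finset.Ico n (n+k₀), r i) ω)) P :=
      hindep.integrable_exp_mul_sum hmeas (s := Finset.Ico n (n+k₀)) (fun i _ =>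
        ExpAux.rv_integrable_exp (hmeas i) (hmap i) (hlam_pos i) (hntlam i))
    have hch := measure_le_le_exp_mul_mgf (μ := P)
      (X := ∑ i ∈ Finset.Ico n (n+k₀), r i) ((1-δ)*m) (neg_nonpos.mpr ht0.le) hintlow
    have hcoef : -t + t^2/L ≤ 0 := by
      have h1 : t^2/L ≤ t := by
        rw [div_le_iff₀ hL]; nlinarith
      linarith
    have hmgf : mgf (∑ i ∈ Finset.Ico n (n+k₀), r i) P (-t)
        ≤ Real.exp ((-t + t^2/L) * ((1-δ/2)*m)) := by
      rw [hindep.mgf_sum hmeas]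
      have h3 : ∏ i ∈ Finset.Ico n (n+k₀), mgf (r i) P (-t)
          = ∏ i ∈ Finset.Ico n (n+k₀), (lam i/(lam i + t)) :=
        Finset.prod_congr rfl fun i _ => by
          rw [ExpAux.rv_mgf (hmeas i) (hmap i) (hlam_pos i) (hntlam i), sub_neg_eq_add]
      rw [h3]
      calc ∏ i ∈ Finset.Ico n (n+k₀), (lam i/(lam i + t))
          ≤ ∏ i ∈ Finset.Ico n (n+k₀), Real.exp ((-t + t^2/L)*(1/lam i)) :=
            Finset.prod_le_prod (fun i _ => div_nonneg (hlam_pos i).le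
              (by have := hlam_pos i; linarith)) (fun i hi => hfactor_low i (hmem i hi))
        _ = Real.exp ((-t + t^2/L) * ∑ i ∈ Finset.Ico n (n+k₀), 1/lam i) := by
            rw [← Real.exp_sum, ← Finset.mul_sum]
        _ ≤ Real.exp ((-t + t^2/L) * ((1-δ/2)*m)) := by
            refine Real.exp_le_exp.mpr (mul_le_mul_of_nonpos_left ?_ hcoef)
            rw [hico_inv]; exact hk₀.le
    have hsubset : {ω | R n ω ≤ (1-δ)*m}
        ≤ᵐ[P] {ω | (∑ i ∈ Finset.Ico n (n+k₀), r i) ω ≤ (1-δ)*m} := by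
      filter_upwards [hGtail] with ω hω
      intro hle
      have hS : (∑ i ∈ Finset.Ico n (n+k₀), r i) ω
          = ∑ j ∈ Finset.range k₀, r (n+j) ω := hico k₀ ω
      have h2 : ∑ j ∈ Finset.range k₀, r (n+j) ω ≤ R n ω := by
        rw [hR n ω]
        exact Summable.sum_le_tsum _ (fun j _ => hω.1 (n+j)) (hω.2 n)
      show (∑ i ∈ Finset.Ico n (n+k₀), r i) ω ≤ (1-δ)*m
      rw [hS]
      exact h2.trans hle
    have hbound : (P {ω | (∑ i ∈ Finset.Ico n (n+k₀), r i) ω ≤ (1-δ)*m}).toReal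
        ≤ Real.exp (-(δ^2*L*m)/16) := by
      refine hch.trans ?_
      calc Real.exp (-(-t)*((1-δ)*m)) * mgf (∑ i ∈ Finset.Ico n (n+k₀), r i) P (-t)
          ≤ Real.exp (-(-t)*((1-δ)*m)) * Real.exp ((-t + t^2/L) * ((1-δ/2)*m)) :=
            mul_le_mul_of_nonneg_left hmgf (hexp_nonneg _)
        _ = Real.exp (-(-t)*((1-δ)*m) + (-t + t^2/L) * ((1-δ/2)*m)) := (Real.exp_add _ _).symm
        _ ≤ Real.exp (-(δ^2*L*m)/16) := by
            refine Real.exp_le_exp.mpr ?_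
            have hexpand : -(-t)*((1-δ)*m) + (-t + t^2/L) * ((1-δ/2)*m)
                = (δ*L*m) * (-(δ/16) - δ^2/32) + -(δ^2*L*m)/16 * 0 := by
              rw [ht_def]; field_simp; ring
            rw [hexpand]
            have : (δ*L*m) * (-(δ/16) - δ^2/32) ≤ -(δ^2*L*m)/16 := by
              have h9 : (0:ℝ) ≤ δ*L*m := by positivity
              nlinarith [mul_nonneg (mul_nonneg hδpos.le hL.le) hm_pos.le,
                mul_nonneg h9 (mul_nonneg hδpos.le hδpos.le)]
            linarith
    calc P {ω | R n ω ≤ (1-δ)*m}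
        ≤ P {ω | (∑ i ∈ Finset.Ico n (n+k₀), r i) ω ≤ (1-δ)*m} := measure_mono_ae hsubset
      _ ≤ ENNReal.ofReal (Real.exp (-(δ^2*L*m)/16)) :=
          (ENNReal.le_ofReal_iff_toReal_le (measure_ne_top P _) (hexp_nonneg _)).mpr hbound
  -- key exponent bound
  have hkey : (n:ℝ)^((1:ℝ)/4) + Real.log 2 ≤ δ^2*L*m/16 := by
    have hB : (0:ℝ) < ((n:ℝ)+(n:ℝ)+θ)^α := Real.rpow_pos_of_pos (by linarith) _
    have hA : (0:ℝ) < ((n:ℝ)+θ)^α := Real.rpow_pos_of_pos (hbase n) _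
    -- lower bound on m
    have hm_lb : (n:ℝ) * (1/(μ*(c₂*((n:ℝ)+(n:ℝ)+θ)^α))) ≤ m := by
      rw [hm]
      have h1 : ∀ j ∈ Finset.range n, (1/(μ*(c₂*((n:ℝ)+(n:ℝ)+θ)^α))) ≤ 1/lam (n+j) := by
        intro j hj
        have hj' : (j:ℝ) ≤ (n:ℝ) := by exact_mod_cast (Finset.mem_range.mp hj).le
        refine one_div_le_one_div_of_le (hlam_pos _) ((hlam_ub (n+j)).trans ?_)
        have hcast : ((n+j:ℕ):ℝ) = (n:ℝ)+(j:ℝ) := by push_cast; ring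
        have h2 : (((n+j:ℕ):ℝ)+θ)^α ≤ ((n:ℝ)+(n:ℝ)+θ)^α := by
          rw [hcast]
          refine Real.rpow_le_rpow ?_ (by linarith) (by linarith)
          have := (Nat.cast_nonneg j : (0:ℝ) ≤ j); linarith
        exact mul_le_mul_of_nonneg_left (mul_le_mul_of_nonneg_left h2 hc₂.le) hμ0.le
      calc (n:ℝ) * (1/(μ*(c₂*((n:ℝ)+(n:ℝ)+θ)^α)))
          = ∑ _j ∈ Finset.range n, (1/(μ*(c₂*((n:ℝ)+(n:ℝ)+θ)^α))) := by
            rw [Finset.sum_const, Finset.card_range, nsmul_eq_mul]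
        _ ≤ ∑ j ∈ Finset.range n, 1/lam (n+j) := Finset.sum_le_sum h1
        _ ≤ ∑' j : ℕ, 1/lam (n+j) := Summable.sum_le_tsum _ (fun j _ => (hinvpos _).le) (hsumtail n)
    -- ratio of rpow bound
    have hAB : ((1:ℝ)/3)^α * ((n:ℝ)+(n:ℝ)+θ)^α ≤ ((n:ℝ)+θ)^α := by
      rw [← Real.mul_rpow (by norm_num) (by linarith)]
      exact Real.rpow_le_rpow (by positivity) (by linarith) (by linarith)
    -- rpow algebra
    have hδ2 : δ^2 = (n:ℝ)^(-(1:ℝ)/2) := by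
      rw [hδ_def, ← Real.rpow_natCast ((n:ℝ)^(-(1:ℝ)/4)) 2, ← Real.rpow_mul hnpos.le]
      norm_num
    have hn12 : (n:ℝ)^(-(1:ℝ)/2) * (n:ℝ) = (n:ℝ)^((1:ℝ)/2) := by
      calc (n:ℝ)^(-(1:ℝ)/2) * (n:ℝ) = (n:ℝ)^(-(1:ℝ)/2) * (n:ℝ)^(1:ℝ) := by
            rw [Real.rpow_one]
        _ = (n:ℝ)^(-(1:ℝ)/2 + 1) := (Real.rpow_add hnpos _ _).symm
        _ = (n:ℝ)^((1:ℝ)/2) := by norm_num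
    have hhalf : (n:ℝ)^((1:ℝ)/2) = (n:ℝ)^((1:ℝ)/4) * (n:ℝ)^((1:ℝ)/4) := by
      rw [← Real.rpow_add hnpos]; norm_num
    -- main bound : K * n^{1/2} ≤ δ² L m
    have hmain : K * (n:ℝ)^((1:ℝ)/2) ≤ δ^2*L*m := by
      have hstep : δ^2 * L * ((n:ℝ) * (1/(μ*(c₂*((n:ℝ)+(n:ℝ)+θ)^α)))) ≤ δ^2*L*m :=
        mul_le_mul_of_nonneg_left hm_lb (by positivity)
      refine le_trans ?_ hstep
      have hLHS : δ^2 * L * ((n:ℝ) * (1/(μ*(c₂*((n:ℝ)+(n:ℝ)+θ)^α))))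
          = (n:ℝ)^((1:ℝ)/2) * ((c₁ * ((n:ℝ)+θ)^α) / (c₂ * ((n:ℝ)+(n:ℝ)+θ)^α)) := by
        rw [hδ2, hL_def, ← hn12]
        field_simp
      rw [hLHS]
      have h13 : ((1:ℝ)/3)^α ≤ ((n:ℝ)+θ)^α / ((n:ℝ)+(n:ℝ)+θ)^α := (le_div_iff₀ hB).mpr hAB
      have hKle : K ≤ (c₁ * ((n:ℝ)+θ)^α) / (c₂ * ((n:ℝ)+(n:ℝ)+θ)^α) := by
        rw [hK_def]
        calc c₁/c₂ * ((1:ℝ)/3)^α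
            ≤ c₁/c₂ * (((n:ℝ)+θ)^α / ((n:ℝ)+(n:ℝ)+θ)^α) :=
              mul_le_mul_of_nonneg_left h13 (by positivity)
          _ = (c₁ * ((n:ℝ)+θ)^α) / (c₂ * ((n:ℝ)+(n:ℝ)+θ)^α) := div_mul_div_comm _ _ _ _
      calc K * (n:ℝ)^((1:ℝ)/2)
          ≤ ((c₁ * ((n:ℝ)+θ)^α) / (c₂ * ((n:ℝ)+(n:ℝ)+θ)^α)) * (n:ℝ)^((1:ℝ)/2) :=
            mul_le_mul_of_nonneg_right hKle (Real.rpow_nonneg hnpos.le _)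
        _ = (n:ℝ)^((1:ℝ)/2) * ((c₁ * ((n:ℝ)+θ)^α) / (c₂ * ((n:ℝ)+(n:ℝ)+θ)^α)) := mul_comm _ _
    -- final arithmetic
    set u : ℝ := (n:ℝ)^((1:ℝ)/4) with hu_def
    have hu1 : (1:ℝ) ≤ u := Real.one_le_rpow hn1 (by norm_num)
    have hulog : 1 + Real.log 2 ≤ K/16 * u := by
      rw [div_mul_eq_mul_div, le_div_iff₀ (by norm_num : (0:ℝ) < 16)]
      calc (1 + Real.log 2) * 16 = 16/K * (1 + Real.log 2) * K := by field_simp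
        _ ≤ u * K := by
          refine mul_le_mul_of_nonneg_right ?_ hK.le
          exact hcond2
        _ = K * u := mul_comm _ _
    have hlog2 : (0:ℝ) ≤ Real.log 2 := Real.log_nonneg one_le_two
    have hKn : K * (n:ℝ)^((1:ℝ)/2) = K * u * u := by rw [hhalf, hu_def]; ring
    have : u + Real.log 2 ≤ K * u * u / 16 := by nlinarith
    calc (n:ℝ)^((1:ℝ)/4) + Real.log 2 = u + Real.log 2 := by rw [hu_def]
      _ ≤ K * u * u / 16 := this
      _ = K * (n:ℝ)^((1:ℝ)/2) / 16 := by rw [hKn]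
      _ ≤ δ^2*L*m/16 := by linarith
  -- assemble
  calc P {ω | |R n ω / m - 1| > δ}
      ≤ P ({ω | (1+δ)*m ≤ R n ω} ∪ {ω | R n ω ≤ (1-δ)*m}) := by
        refine measure_mono fun ω hω => ?_
        by_contra hnot
        simp only [Set.mem_union, Set.mem_setOf_eq, not_or, not_le] at hnot
        obtain ⟨h1, h2⟩ := hnot
        have hd1 : R n ω / m < 1 + δ := (div_lt_iff₀ hm_pos).mpr (by linarith)
        have hd2 : 1 - δ < R n ω / m := (lt_div_iff₀ hm_pos).mpr (by linarith)
        have habs : |R n ω / m - 1| ≤ δ := abs_le.mpr ⟨by linarith, by linarith⟩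
        exact absurd hω (not_lt.mpr habs)
    _ ≤ P {ω | (1+δ)*m ≤ R n ω} + P {ω | R n ω ≤ (1-δ)*m} := measure_union_le _ _
    _ ≤ ENNReal.ofReal (Real.exp (-(δ^2*L*m)/8)) + ENNReal.ofReal (Real.exp (-(δ^2*L*m)/16)) :=
        add_le_add hup hlow
    _ ≤ ENNReal.ofReal (Real.exp (-(n:ℝ)^((1:ℝ)/4))) := by
        rw [← ENNReal.ofReal_add (Real.exp_pos _).le (Real.exp_pos _).le]
        refine ENNReal.ofReal_le_ofReal ?_
        have h1 : Real.exp (-(δ^2*L*m)/8) ≤ Real.exp (-(δ^2*L*m)/16) := by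
          refine Real.exp_le_exp.mpr ?_
          nlinarith [sq_nonneg δ, hL.le, hm_pos.le, mul_nonneg (mul_nonneg (sq_nonneg δ) hL.le) hm_pos.le]
        have h2 : Real.exp (-(δ^2*L*m)/16) + Real.exp (-(δ^2*L*m)/16)
            = Real.exp (Real.log 2 + (-(δ^2*L*m)/16)) := by
          rw [Real.exp_add, Real.exp_log two_pos]; ring
        have h3 : Real.log 2 + (-(δ^2*L*m)/16) ≤ -(n:ℝ)^((1:ℝ)/4) := by linarith
        calc Real.exp (-(δ^2*L*m)/8) + Real.exp (-(δ^2*L*m)/16)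
            ≤ Real.exp (-(δ^2*L*m)/16) + Real.exp (-(δ^2*L*m)/16) := by linarith
          _ = Real.exp (Real.log 2 + (-(δ^2*L*m)/16)) := h2
          _ ≤ Real.exp (-(n:ℝ)^((1:ℝ)/4)) := Real.exp_le_exp.mpr h3
end

section
/- Let X₁, X₂, … be i.i.d. Bernoulli(μ) random variables with μ ∈ (0,1), let S_k = X₁ + ⋯ + X_k, and for n ≥ 1 let τ_n = inf{k : S_k ≥ n} (which is almost surely finite). Then for every Δ with 0 < Δ < 2μ and μ + Δ/2 ≤ 1, there exists a constant ε > 0, depending only on μ and Δ and not on n, such that for all n ≥ 1: P(n/τ_n > μ + Δ/2) ≤ 2e^{−2εn} and P(n/τ_n < μ − Δ/2) ≤ 2e^{−2εn}. -/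
open MeasureTheory ProbabilityTheory Real


section aux
variable {Ω : Type*} [MeasurableSpace Ω] {P : Measure Ω} [IsProbabilityMeasure P]
  {μ : ℝ} {X : ℕ → Ω → ℝ}

lemma bht_exp_int (hmeas : ∀ k, Measurable (X k)) (h01 : ∀ k ω, X k ω = 0 ∨ X k ω = 1)
    (t : ℝ) (i : ℕ) : Integrable (fun ω => exp (t * X i ω)) P := by
  refine Integrable.mono' (integrable_const (max 1 (exp t)))
    (((hmeas i).const_mul t).exp.aestronglyMeasurable)
    (Filter.Eventually.of_forall fun ω => ?_)
  rw [norm_eq_abs, abs_of_pos (exp_pos _)]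
  rcases h01 i ω with h | h
  · simp [h, le_max_left]
  · simp [h, le_max_right]

lemma bht_X_int (hmeas : ∀ k, Measurable (X k)) (h01 : ∀ k ω, X k ω = 0 ∨ X k ω = 1)
    (i : ℕ) : Integrable (X i) P := by
  refine Integrable.mono' (integrable_const 1) (hmeas i).aestronglyMeasurable
    (Filter.Eventually.of_forall fun ω => ?_)
  rcases h01 i ω with h | h <;> simp [h]

lemma bht_integral_X (hmeas : ∀ k, Measurable (X k)) (h01 : ∀ k ω, X k ω = 0 ∨ X k ω = 1)
    (hber : ∀ k, P {ω | X k ω = 1} = ENNReal.ofReal μ) (hμ0 : 0 ≤ μ) (i : ℕ) :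
    ∫ ω, X i ω ∂P = μ := by
  have hs : MeasurableSet {ω | X i ω = 1} := hmeas i (measurableSet_singleton 1)
  have h1 : X i = Set.indicator {ω | X i ω = 1} (fun _ => (1:ℝ)) := by
    funext ω
    by_cases h : X i ω = 1
    · simp [Set.indicator_of_mem, h]
    · rcases h01 i ω with h0 | h1
      · simp [Set.indicator_of_notMem, h, h0]
      · exact absurd h1 h
  rw [h1, integral_indicator_const _ hs, measureReal_def, hber i, smul_eq_mul, mul_one,
    ENNReal.toReal_ofReal hμ0]

lemma bht_mgf (hmeas : ∀ k, Measurable (X k)) (h01 : ∀ k ω, X k ω = 0 ∨ X k ω = 1)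
    (hber : ∀ k, P {ω | X k ω = 1} = ENNReal.ofReal μ) (hμ0 : 0 ≤ μ) (t : ℝ) (i : ℕ) :
    mgf (X i) P t = 1 + μ * (exp t - 1) := by
  have hpt : (fun ω => exp (t * X i ω)) = fun ω => 1 + (exp t - 1) * X i ω := by
    funext ω
    rcases h01 i ω with h | h <;> simp [h]
  rw [mgf, hpt, integral_add (integrable_const 1) ((bht_X_int hmeas h01 i).const_mul _),
    MeasureTheory.integral_const_mul, integral_const, measureReal_def, measure_univ, ENNReal.toReal_one, smul_eq_mul,
    mul_one, bht_integral_X hmeas h01 hber hμ0 i, mul_comm]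

lemma bht_mgf_sum (hmeas : ∀ k, Measurable (X k)) (h01 : ∀ k ω, X k ω = 0 ∨ X k ω = 1)
    (hber : ∀ k, P {ω | X k ω = 1} = ENNReal.ofReal μ) (hμ0 : 0 ≤ μ)
    (hindep : iIndepFun X P) (t : ℝ) (k : ℕ) :
    mgf (∑ i ∈ Finset.range k, X i) P t = (1 + μ * (exp t - 1)) ^ k := by
  rw [hindep.mgf_sum hmeas (Finset.range k)]
  simp [bht_mgf hmeas h01 hber hμ0 t, Finset.prod_const]

end aux

section tails
variable {Ω : Type*} [MeasurableSpace Ω] {P : Measure Ω} [IsProbabilityMeasure P]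
  {μ : ℝ} {X : ℕ → Ω → ℝ} {S : ℕ → Ω → ℝ}

lemma bht_one_add (hμ : μ ∈ Set.Ioo (0:ℝ) 1) (t : ℝ) : 0 ≤ 1 + μ * (exp t - 1) := by
  nlinarith [exp_pos t, hμ.1, hμ.2]

lemma bht_pow_le (hμ : μ ∈ Set.Ioo (0:ℝ) 1) (t : ℝ) (k : ℕ) :
    (1 + μ * (exp t - 1)) ^ k ≤ exp (k * (μ * (exp t - 1))) := by
  calc (1 + μ * (exp t - 1)) ^ k ≤ (exp (μ * (exp t - 1))) ^ k :=
        pow_le_pow_left₀ (bht_one_add hμ t) (by linarith [add_one_le_exp (μ * (exp t - 1))]) k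
    _ = exp (k * (μ * (exp t - 1))) := (exp_nat_mul _ k).symm

lemma bht_upper (hμ : μ ∈ Set.Ioo (0:ℝ) 1) (hmeas : ∀ k, Measurable (X k))
    (h01 : ∀ k ω, X k ω = 0 ∨ X k ω = 1)
    (hber : ∀ k, P {ω | X k ω = 1} = ENNReal.ofReal μ)
    (hindep : iIndepFun X P)
    (hS : ∀ k ω, S k ω = ∑ i ∈ Finset.range k, X i ω)
    {t : ℝ} (ht : 0 ≤ t) (k : ℕ) (a : ℝ) :
    P {ω | a ≤ S k ω} ≤ ENNReal.ofReal (exp (-t * a + k * (μ * (exp t - 1)))) := by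
  have hSk : S k = ∑ i ∈ Finset.range k, X i := by
    funext ω; rw [hS k ω, Finset.sum_apply]
  have hint : Integrable (fun ω => exp (t * S k ω)) P := by
    rw [hSk]
    exact hindep.integrable_exp_mul_sum hmeas (fun i _ => bht_exp_int hmeas h01 t i)
  have h := measure_ge_le_exp_mul_mgf (μ := P) (X := S k) a ht hint
  have hm : mgf (S k) P t = (1 + μ * (exp t - 1)) ^ k := by
    rw [hSk]; exact bht_mgf_sum hmeas h01 hber hμ.1.le hindep t k
  rw [hm] at h
  rw [ENNReal.le_ofReal_iff_toReal_le (measure_ne_top _ _) (exp_pos _).le]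
  calc (P {ω | a ≤ S k ω}).toReal ≤ exp (-t * a) * (1 + μ * (exp t - 1)) ^ k := h
    _ ≤ exp (-t * a) * exp (k * (μ * (exp t - 1))) := by
        exact mul_le_mul_of_nonneg_left (bht_pow_le hμ t k) (exp_pos _).le
    _ = exp (-t * a + k * (μ * (exp t - 1))) := (exp_add _ _).symm

lemma bht_lower (hμ : μ ∈ Set.Ioo (0:ℝ) 1) (hmeas : ∀ k, Measurable (X k))
    (h01 : ∀ k ω, X k ω = 0 ∨ X k ω = 1)
    (hber : ∀ k, P {ω | X k ω = 1} = ENNReal.ofReal μ)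
    (hindep : iIndepFun X P)
    (hS : ∀ k ω, S k ω = ∑ i ∈ Finset.range k, X i ω)
    {t : ℝ} (ht : t ≤ 0) (k : ℕ) (a : ℝ) :
    P {ω | S k ω ≤ a} ≤ ENNReal.ofReal (exp (-t * a + k * (μ * (exp t - 1)))) := by
  have hSk : S k = ∑ i ∈ Finset.range k, X i := by
    funext ω; rw [hS k ω, Finset.sum_apply]
  have hint : Integrable (fun ω => exp (t * S k ω)) P := by
    rw [hSk]
    exact hindep.integrable_exp_mul_sum hmeas (fun i _ => bht_exp_int hmeas h01 t i)
  have h := measure_le_le_exp_mul_mgf (μ := P) (X := S k) a ht hint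
  have hm : mgf (S k) P t = (1 + μ * (exp t - 1)) ^ k := by
    rw [hSk]; exact bht_mgf_sum hmeas h01 hber hμ.1.le hindep t k
  rw [hm] at h
  rw [ENNReal.le_ofReal_iff_toReal_le (measure_ne_top _ _) (exp_pos _).le]
  calc (P {ω | S k ω ≤ a}).toReal ≤ exp (-t * a) * (1 + μ * (exp t - 1)) ^ k := h
    _ ≤ exp (-t * a) * exp (k * (μ * (exp t - 1))) := by
        exact mul_le_mul_of_nonneg_left (bht_pow_le hμ t k) (exp_pos _).le
    _ = exp (-t * a + k * (μ * (exp t - 1))) := (exp_add _ _).symm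

end tails

section part1
variable {Ω : Type*} [MeasurableSpace Ω] {P : Measure Ω} [IsProbabilityMeasure P]
  {μ : ℝ} {X : ℕ → Ω → ℝ} {S : ℕ → Ω → ℝ}

lemma bht_S_meas (hmeas : ∀ k, Measurable (X k))
    (hS : ∀ k ω, S k ω = ∑ i ∈ Finset.range k, X i ω) (k : ℕ) : Measurable (S k) := by
  have : S k = fun ω => ∑ i ∈ Finset.range k, X i ω := by
    funext ω; rw [hS k ω]
  rw [this]
  exact Finset.measurable_sum _ fun i _ => hmeas i

lemma bht_G_meas (hmeas : ∀ k, Measurable (X k))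
    (hS : ∀ k ω, S k ω = ∑ i ∈ Finset.range k, X i ω) (n : ℕ) :
    MeasurableSet {ω | ∃ k, (n : ℝ) ≤ S k ω} := by
  have : {ω | ∃ k, (n : ℝ) ≤ S k ω} = ⋃ k, {ω | (n : ℝ) ≤ S k ω} := by
    ext ω; simp
  rw [this]
  exact MeasurableSet.iUnion fun k =>
    measurableSet_le measurable_const (bht_S_meas hmeas hS k)

lemma bht_as_finite (hμ : μ ∈ Set.Ioo (0:ℝ) 1) (hmeas : ∀ k, Measurable (X k))
    (h01 : ∀ k ω, X k ω = 0 ∨ X k ω = 1)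
    (hber : ∀ k, P {ω | X k ω = 1} = ENNReal.ofReal μ)
    (hindep : iIndepFun X P)
    (hS : ∀ k ω, S k ω = ∑ i ∈ Finset.range k, X i ω) (n : ℕ) :
    P {ω | ∃ k, (n : ℝ) ≤ S k ω} = 1 := by
  rw [← prob_compl_eq_zero_iff (bht_G_meas hmeas hS n)]
  have hsub : ∀ k : ℕ, {ω | ∃ k, (n : ℝ) ≤ S k ω}ᶜ ⊆ {ω | S k ω ≤ n} := by
    intro k ω hω
    simp only [Set.mem_compl_iff, Set.mem_setOf_eq, not_exists, not_le] at hω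
    exact (hω k).le
  have hb : ∀ k : ℕ,
      P {ω | ∃ k, (n : ℝ) ≤ S k ω}ᶜ ≤
        ENNReal.ofReal (exp (-(-1) * n + k * (μ * (exp (-1) - 1)))) := fun k =>
    (measure_mono (hsub k)).trans
      (bht_lower hμ hmeas h01 hber hindep hS (by norm_num) k n)
  have hc : μ * (exp (-1) - 1) < 0 := by
    have h1 : exp (-1) < 1 := exp_lt_one_iff.mpr (by norm_num)
    nlinarith [hμ.1]
  have hlim : Filter.Tendsto
      (fun k : ℕ => ENNReal.ofReal (exp (-(-1) * n + k * (μ * (exp (-1) - 1)))))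
      Filter.atTop (nhds 0) := by
    rw [← ENNReal.ofReal_zero]
    apply ENNReal.tendsto_ofReal
    apply Real.tendsto_exp_atBot.comp
    apply Filter.tendsto_atBot_add_const_left
    have h1 : Filter.Tendsto (fun k : ℕ => (k : ℝ) * (-(μ * (exp (-1) - 1))))
        Filter.atTop Filter.atTop :=
      Filter.Tendsto.atTop_mul_const (by linarith) tendsto_natCast_atTop_atTop
    have h2 := Filter.tendsto_neg_atTop_atBot.comp h1
    exact h2.congr (fun k => by simp only [Function.comp_apply]; ring)
  exact le_antisymm (ge_of_tendsto' hlim hb) zero_le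
end part1

set_option maxHeartbeats 2000000 in
/-- Let `X 0, X 1, …` be i.i.d. Bernoulli(μ) random variables,
`S k = X 0 + ⋯ + X (k-1)` (the sum of the first `k` of them), and
`τ n = inf {k : S k ≥ n}` (a.s. finite).  For every gap `Δ` with `0 < Δ < 2μ` and
`μ + Δ/2 ≤ 1`, there is `ε > 0`, independent of `n`, with
`P(n/τ_n > μ + Δ/2) ≤ 2e^{−2εn}` and `P(n/τ_n < μ − Δ/2) ≤ 2e^{−2εn}` for all `n ≥ 1`. -/
theorem bernoulli_hitting_time_concentration {Ω : Type*} [MeasurableSpace Ω]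
    (P : Measure Ω) [IsProbabilityMeasure P] (μ : ℝ) (hμ : μ ∈ Set.Ioo (0 : ℝ) 1)
    (X : ℕ → Ω → ℝ) (hmeas : ∀ k, Measurable (X k))
    (h01 : ∀ k ω, X k ω = 0 ∨ X k ω = 1)
    (hber : ∀ k, P {ω | X k ω = 1} = ENNReal.ofReal μ)
    (hindep : iIndepFun X P)
    (S : ℕ → Ω → ℝ) (hS : ∀ k ω, S k ω = ∑ i ∈ Finset.range k, X i ω)
    (τ : ℕ → Ω → ℕ) (hτ : ∀ n ω, τ n ω = sInf {k : ℕ | (n : ℝ) ≤ S k ω}) :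
    (∀ n : ℕ, P {ω | ∃ k, (n : ℝ) ≤ S k ω} = 1) ∧
      ∀ Δ : ℝ, 0 < Δ → Δ < 2 * μ → μ + Δ / 2 ≤ 1 →
        ∃ ε > (0 : ℝ), ∀ n : ℕ, 1 ≤ n →
          P {ω | μ + Δ / 2 < (n : ℝ) / (τ n ω : ℝ)} ≤
              ENNReal.ofReal (2 * Real.exp (-2 * ε * n)) ∧
            P {ω | (n : ℝ) / (τ n ω : ℝ) < μ - Δ / 2} ≤
              ENNReal.ofReal (2 * Real.exp (-2 * ε * n)) := by
  have hpart1 : ∀ n : ℕ, P {ω | ∃ k, (n : ℝ) ≤ S k ω} = 1 :=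
    fun n => bht_as_finite hμ hmeas h01 hber hindep hS n
  refine ⟨hpart1, ?_⟩
  intro Δ hΔ0 hΔμ hcle1
  obtain ⟨hμ0, hμ1⟩ := hμ
  set c : ℝ := μ + Δ / 2 with hc_def
  set c' : ℝ := μ - Δ / 2 with hc'_def
  have hc0 : 0 < c := by simp only [hc_def]; linarith
  have hc'0 : 0 < c' := by simp only [hc'_def]; linarith
  have hμc : μ < c := by simp only [hc_def]; linarith
  have hc'μ : c' < μ := by simp only [hc'_def]; linarith
  set r : ℝ := μ / c with hr_def
  set ρ : ℝ := μ / c' with hρ_def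
  have hr0 : 0 < r := div_pos hμ0 hc0
  have hr1 : r < 1 := (div_lt_one hc0).mpr hμc
  have hρ1 : 1 < ρ := (one_lt_div hc'0).mpr hc'μ
  set t : ℝ := -Real.log r / 2 with ht_def
  have ht0 : 0 < t := by
    have := Real.log_neg hr0 hr1
    simp only [ht_def]; linarith
  set s : ℝ := Real.log ρ / 2 with hs_def
  have hs0 : 0 < s := by
    have := Real.log_pos hρ1
    simp only [hs_def]; linarith
  set g1 : ℝ := t * (1 - Real.exp (-t)) with hg1_def
  have hexpt1 : Real.exp (-t) < 1 := Real.exp_lt_one_iff.mpr (by linarith)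
  have hg1 : 0 < g1 := mul_pos ht0 (by linarith)
  set g2 : ℝ := s ^ 2 with hg2_def
  have hg2 : 0 < g2 := pow_pos hs0 2
  have hkey1 : r * (Real.exp t - 1) ≤ t * Real.exp (-t) := by
    have h2 : Real.exp (-t) * Real.exp t = 1 := by rw [← Real.exp_add]; simp
    have h1 : -t + 1 ≤ Real.exp (-t) := Real.add_one_le_exp _
    have h3 : Real.exp t - 1 ≤ t * Real.exp t := by nlinarith [Real.exp_pos t]
    have hre : r * Real.exp t = Real.exp (-t) := by
      nth_rewrite 1 [← Real.exp_log hr0]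
      rw [← Real.exp_add]
      congr 1
      simp only [ht_def]; ring
    calc r * (Real.exp t - 1) ≤ r * (t * Real.exp t) :=
          mul_le_mul_of_nonneg_left h3 hr0.le
      _ = t * (r * Real.exp t) := by ring
      _ = t * Real.exp (-t) := by rw [hre]
  have hkey2 : s + s ^ 2 ≤ ρ * (1 - Real.exp (-s)) := by
    have h2 : Real.exp (-s) * Real.exp s = 1 := by rw [← Real.exp_add]; simp
    have h1 : s + 1 ≤ Real.exp s := Real.add_one_le_exp s
    have hρe : ρ = Real.exp s * Real.exp s := by
      nth_rewrite 1 [← Real.exp_log (lt_trans one_pos hρ1)]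
      rw [← Real.exp_add]
      congr 1
      simp only [hs_def]; ring
    rw [hρe]
    nlinarith [Real.exp_pos s, Real.exp_pos (-s)]
  have hlog2 : 0 < Real.log 2 := Real.log_pos (by norm_num)
  have hlog2' : Real.log 2 ≤ 1 := by
    have := Real.log_le_sub_one_of_pos (by norm_num : (0:ℝ) < 2); linarith
  set ε : ℝ := min (g1 / 2) (g2 * Real.log 2 / 4) with hε_def
  have hε0 : 0 < ε := lt_min (by positivity) (by positivity)
  refine ⟨ε, hε0, ?_⟩
  intro n hn
  have hn1 : (1 : ℝ) ≤ n := by exact_mod_cast hn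
  set G : Set Ω := {ω | ∃ k, (n : ℝ) ≤ S k ω} with hG_def
  have hGc : P Gᶜ = 0 :=
    (prob_compl_eq_zero_iff (bht_G_meas hmeas hS n)).mpr (hpart1 n)
  have hmono : ∀ ω, ∀ j k : ℕ, j ≤ k → S j ω ≤ S k ω := by
    intro ω j k hjk
    rw [hS, hS]
    refine Finset.sum_le_sum_of_subset_of_nonneg (Finset.range_subset_range.mpr hjk) ?_
    intro i _ _
    rcases h01 i ω with h | h <;> simp [h]
  have hτfacts : ∀ ω, ω ∈ G → (n : ℝ) ≤ S (τ n ω) ω ∧ 1 ≤ τ n ω := by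
    intro ω hω
    have hne : {k : ℕ | (n : ℝ) ≤ S k ω}.Nonempty := hω
    have hmem : (n : ℝ) ≤ S (τ n ω) ω := by rw [hτ]; exact Nat.sInf_mem hne
    refine ⟨hmem, ?_⟩
    by_contra h
    have h0 : τ n ω = 0 := by omega
    rw [h0, hS] at hmem
    simp only [Finset.range_zero, Finset.sum_empty] at hmem
    linarith
  constructor
  · -- upper deviation
    set k₀ : ℕ := ⌈(n : ℝ) / c⌉₊ - 1 with hk0_def
    have hx0 : (0 : ℝ) < (n : ℝ) / c := by positivity
    have hceil1 : 1 ≤ ⌈(n : ℝ) / c⌉₊ := Nat.one_le_ceil_iff.mpr hx0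
    have hsub : {ω | c < (n : ℝ) / (τ n ω : ℝ)} ⊆ {ω | (n : ℝ) ≤ S k₀ ω} ∪ Gᶜ := by
      intro ω hA
      by_cases hω : ω ∈ G
      · left
        obtain ⟨hmem, hτ1⟩ := hτfacts ω hω
        have hTpos : (0 : ℝ) < (τ n ω : ℝ) := by exact_mod_cast hτ1
        have h1 : c * (τ n ω : ℝ) < n := (lt_div_iff₀ hTpos).mp hA
        have h2 : ((τ n ω : ℕ) : ℝ) < (n : ℝ) / c := (lt_div_iff₀ hc0).mpr (by linarith)
        have h3 : τ n ω < ⌈(n : ℝ) / c⌉₊ := Nat.lt_ceil.mpr h2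
        have h4 : τ n ω ≤ k₀ := by omega
        exact le_trans hmem (hmono ω _ _ h4)
      · exact Or.inr hω
    have hPA : P {ω | c < (n : ℝ) / (τ n ω : ℝ)} ≤ P {ω | (n : ℝ) ≤ S k₀ ω} := by
      calc P {ω | c < (n : ℝ) / (τ n ω : ℝ)} ≤ P ({ω | (n : ℝ) ≤ S k₀ ω} ∪ Gᶜ) :=
            measure_mono hsub
        _ ≤ P {ω | (n : ℝ) ≤ S k₀ ω} + P Gᶜ := measure_union_le _ _
        _ = P {ω | (n : ℝ) ≤ S k₀ ω} := by rw [hGc, add_zero]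
    have hcher := bht_upper (P := P) ⟨hμ0, hμ1⟩ hmeas h01 hber hindep hS ht0.le k₀ n
    refine hPA.trans (hcher.trans (ENNReal.ofReal_le_ofReal ?_))
    have hk0le : (k₀ : ℝ) ≤ (n : ℝ) / c := by
      have hcast : (k₀ : ℝ) = (⌈(n : ℝ) / c⌉₊ : ℝ) - 1 := by
        simp only [hk0_def]
        push_cast [Nat.cast_sub hceil1]
        ring
      have hlt : (⌈(n : ℝ) / c⌉₊ : ℝ) < (n : ℝ) / c + 1 := Nat.ceil_lt_add_one hx0.le
      linarith
    have hμet : 0 ≤ μ * (Real.exp t - 1) := by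
      have := Real.one_le_exp ht0.le
      nlinarith
    have hexpo : -t * (n : ℝ) + (k₀ : ℝ) * (μ * (Real.exp t - 1)) ≤ -2 * ε * n := by
      have h1 : (k₀ : ℝ) * (μ * (Real.exp t - 1)) ≤ ((n : ℝ) / c) * (μ * (Real.exp t - 1)) :=
        mul_le_mul_of_nonneg_right hk0le hμet
      have h2 : ((n : ℝ) / c) * (μ * (Real.exp t - 1)) = (n : ℝ) * (r * (Real.exp t - 1)) := by
        simp only [hr_def]; ring
      have h3 : (n : ℝ) * (r * (Real.exp t - 1)) ≤ (n : ℝ) * (t * Real.exp (-t)) :=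
        mul_le_mul_of_nonneg_left hkey1 (by positivity)
      have h4 : 2 * ε ≤ g1 := by
        have h := min_le_left (g1 / 2) (g2 * Real.log 2 / 4)
        linarith [hε_def.le, hε_def.ge]
      have h5 : -t * (n : ℝ) + (n : ℝ) * (t * Real.exp (-t)) = -(n : ℝ) * g1 := by
        simp only [hg1_def]; ring
      nlinarith [hn1]
    calc Real.exp (-t * (n : ℝ) + (k₀ : ℝ) * (μ * (Real.exp t - 1)))
        ≤ Real.exp (-2 * ε * n) := Real.exp_le_exp.mpr hexpo
      _ ≤ 2 * Real.exp (-2 * ε * n) := by linarith [Real.exp_pos (-2 * ε * (n : ℝ))]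
  · -- lower deviation
    set k₁ : ℕ := ⌊(n : ℝ) / c'⌋₊ with hk1_def
    have hsub : {ω | (n : ℝ) / (τ n ω : ℝ) < c'} ⊆ {ω | S k₁ ω ≤ n} ∪ Gᶜ := by
      intro ω hB
      by_cases hω : ω ∈ G
      · left
        obtain ⟨hmem, hτ1⟩ := hτfacts ω hω
        have hTpos : (0 : ℝ) < (τ n ω : ℝ) := by exact_mod_cast hτ1
        have h1 : (n : ℝ) < c' * (τ n ω : ℝ) := (div_lt_iff₀ hTpos).mp hB
        have h2 : (n : ℝ) / c' < ((τ n ω : ℕ) : ℝ) := (div_lt_iff₀ hc'0).mpr (by linarith)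
        have h3 : (k₁ : ℝ) < ((τ n ω : ℕ) : ℝ) :=
          lt_of_le_of_lt (Nat.floor_le (by positivity)) h2
        have h4 : k₁ < τ n ω := by exact_mod_cast h3
        have h5 : k₁ ∉ {k : ℕ | (n : ℝ) ≤ S k ω} := by
          apply Nat.notMem_of_lt_sInf
          rw [← hτ]; exact h4
        simp only [Set.mem_setOf_eq, not_le] at h5
        exact h5.le
      · exact Or.inr hω
    have hPB : P {ω | (n : ℝ) / (τ n ω : ℝ) < c'} ≤ P {ω | S k₁ ω ≤ n} := by
      calc P {ω | (n : ℝ) / (τ n ω : ℝ) < c'} ≤ P ({ω | S k₁ ω ≤ n} ∪ Gᶜ) :=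
            measure_mono hsub
        _ ≤ P {ω | S k₁ ω ≤ n} + P Gᶜ := measure_union_le _ _
        _ = P {ω | S k₁ ω ≤ n} := by rw [hGc, add_zero]
    have hcher := bht_lower (P := P) ⟨hμ0, hμ1⟩ hmeas h01 hber hindep hS
      (t := -s) (by linarith) k₁ n
    have hexps1 : Real.exp (-s) < 1 := Real.exp_lt_one_iff.mpr (by linarith)
    have hexps0 : 0 < Real.exp (-s) := Real.exp_pos _
    have hσ : μ * (Real.exp (-s) - 1) ≤ 0 := by nlinarith
    have hexpo : -(-s) * (n : ℝ) + (k₁ : ℝ) * (μ * (Real.exp (-s) - 1)) ≤ 1 - (n : ℝ) * g2 := by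
      have hfl : (n : ℝ) / c' - 1 ≤ (k₁ : ℝ) := by
        have := Nat.lt_floor_add_one ((n : ℝ) / c')
        linarith
      have h1 : (k₁ : ℝ) * (μ * (Real.exp (-s) - 1)) ≤
          ((n : ℝ) / c' - 1) * (μ * (Real.exp (-s) - 1)) :=
        mul_le_mul_of_nonpos_right hfl hσ
      have h2 : ((n : ℝ) / c' - 1) * (μ * (Real.exp (-s) - 1)) =
          -(n : ℝ) * (ρ * (1 - Real.exp (-s))) + μ * (1 - Real.exp (-s)) := by
        simp only [hρ_def]; ring
      have h3 : (n : ℝ) * (s + s ^ 2) ≤ (n : ℝ) * (ρ * (1 - Real.exp (-s))) :=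
        mul_le_mul_of_nonneg_left hkey2 (by positivity)
      have h4 : μ * (1 - Real.exp (-s)) ≤ 1 := by nlinarith
      simp only [hg2_def]
      nlinarith
    refine hPB.trans ?_
    by_cases hng : 2 ≤ (n : ℝ) * g2
    · refine hcher.trans (ENNReal.ofReal_le_ofReal ?_)
      have h4 : 2 * ε ≤ g2 * Real.log 2 / 2 := by
        have h := min_le_right (g1 / 2) (g2 * Real.log 2 / 4)
        linarith [hε_def.le, hε_def.ge]
      have hfin : -(-s) * (n : ℝ) + (k₁ : ℝ) * (μ * (Real.exp (-s) - 1)) ≤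
          Real.log 2 + -2 * ε * n := by
        have h5 : 2 * ε * n ≤ (g2 / 2) * n := by
          have h6 : g2 * Real.log 2 / 2 ≤ g2 / 2 := by nlinarith
          nlinarith
        nlinarith [hexpo]
      calc Real.exp (-(-s) * (n : ℝ) + (k₁ : ℝ) * (μ * (Real.exp (-s) - 1)))
          ≤ Real.exp (Real.log 2 + -2 * ε * n) := Real.exp_le_exp.mpr hfin
        _ = 2 * Real.exp (-2 * ε * n) := by
            rw [Real.exp_add, Real.exp_log (by norm_num : (0:ℝ) < 2)]
    · have h1 : (1 : ℝ) ≤ 2 * Real.exp (-2 * ε * n) := by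
        have h2 : 2 * ε * n ≤ Real.log 2 := by
          have h3 : ε ≤ g2 * Real.log 2 / 4 := min_le_right _ _
          push_neg at hng
          nlinarith
        have h4 : Real.exp (-Real.log 2) ≤ Real.exp (-2 * ε * n) :=
          Real.exp_le_exp.mpr (by linarith)
        rw [Real.exp_neg, Real.exp_log (by norm_num : (0:ℝ) < 2)] at h4
        linarith
      calc P {ω | S k₁ ω ≤ n} ≤ 1 := prob_le_one
        _ = ENNReal.ofReal 1 := by simp
        _ ≤ ENNReal.ofReal (2 * Real.exp (-2 * ε * n)) := ENNReal.ofReal_le_ofReal h1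
end
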